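/- arXiv:0811.0468 — 7 statements merged into one kernel-verified Lean document; each statement's English description precedes it below -/
import Mathlib

section
/- For any game ν on N and any Borel measurable function h : ℝ → ℝ such that h(Y_ν) is integrable, one has E[h(Y_ν)] = (1/n!) · Σ_{σ ∈ 𝔖_n} E[h(Y_ν^σ)]. -/
open MeasureTheory ProbabilityTheory Finset

noncomputable section

namespace ChoquetPaper

variable {n : ℕ} {Ω : Type*}

/-- `ν_i^σ := ν({σ(1),…,σ(i)})` (here `i : ℕ`, `0 ≤ i ≤ n`). -/
def nuSig (ν : Finset (Fin n) → ℝ) (σ : Equiv.Perm (Fin n)) (i : ℕ) : ℝ :=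
  ν ((Finset.univ.filter (fun j : Fin n => (j : ℕ) < i)).image σ)

/-- The Choquet sum `Σ_{i=1}^n p_i^{ν,σ} x_{σ(i)}` w.r.t. a fixed permutation `σ`. -/
def choquetPerm (ν : Finset (Fin n) → ℝ) (σ : Equiv.Perm (Fin n)) (x : Fin n → ℝ) : ℝ :=
  ∑ i : Fin n, (nuSig ν σ ((i : ℕ) + 1) - nuSig ν σ (i : ℕ)) * x (σ i)

/-- A permutation `σ` such that `x_{σ(1)} ≥ ⋯ ≥ x_{σ(n)}`. -/
def sortDesc (x : Fin n → ℝ) : Equiv.Perm (Fin n) :=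
  (Fin.revPerm).trans (Tuple.sort x)

/-- The discrete Choquet integral `C_ν(x)`. -/
def choquet (ν : Finset (Fin n) → ℝ) (x : Fin n → ℝ) : ℝ :=
  choquetPerm ν (sortDesc x) x

/-- The `i`-th order statistic `X_{i:n}` (1-based), with the convention `X_{0:n} := 0`. -/
def orderStat (X : Fin n → Ω → ℝ) (i : ℕ) (ω : Ω) : ℝ :=
  if h : i - 1 < n ∧ 1 ≤ i then X (Tuple.sort (fun j => X j ω) ⟨i - 1, h.1⟩) ω else 0

/-- `Y_ν^σ := Σ_{i=1}^n p_i^{ν,σ} X_{n−i+1:n}`. -/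
def Ysig (ν : Finset (Fin n) → ℝ) (σ : Equiv.Perm (Fin n)) (X : Fin n → Ω → ℝ) (ω : Ω) : ℝ :=
  ∑ i : Fin n, (nuSig ν σ ((i : ℕ) + 1) - nuSig ν σ (i : ℕ)) * orderStat X (n - (i : ℕ)) ω

/-- plus truncated power function -/
def tpowPos (t : ℝ) (m : ℕ) : ℝ := if 0 < t then t ^ m else 0

/-- minus truncated power function -/
def tpowNeg (t : ℝ) (m : ℕ) : ℝ := if t < 0 then t ^ m else 0

/-- divided difference at pairwise distinct points indexed by a finite set -/
def ddiff {ι : Type*} [DecidableEq ι] (g : ℝ → ℝ) (s : Finset ι) (a : ι → ℝ) : ℝ :=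
  ∑ i ∈ s, g (a i) / ∏ j ∈ s.erase i, (a i - a j)


/-- The (measurable) region where `y ∘ ρ` is strictly decreasing. -/
def Sset (ρ : Equiv.Perm (Fin n)) : Set (Fin n → ℝ) :=
  {y | ∀ i j : Fin n, i < j → y (ρ j) < y (ρ i)}

lemma measurableSet_Sset (ρ : Equiv.Perm (Fin n)) : MeasurableSet (Sset ρ) := by
  have : Sset ρ = ⋂ (i : Fin n), ⋂ (j : Fin n), ⋂ (_ : i < j),
      {y : Fin n → ℝ | y (ρ j) < y (ρ i)} := by
    ext y; simp [Sset]
  rw [this]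
  exact MeasurableSet.iInter fun i => MeasurableSet.iInter fun j => MeasurableSet.iInter fun _ =>
    measurableSet_lt (measurable_pi_apply _) (measurable_pi_apply _)

lemma sortDesc_eq_of_mem {y : Fin n → ℝ} {ρ : Equiv.Perm (Fin n)} (hy : y ∈ Sset ρ) :
    sortDesc y = ρ := by
  have hmono : ∀ i j : Fin n, i < j →
      y ((Fin.revPerm.trans ρ) i) < y ((Fin.revPerm.trans ρ) j) := by
    intro i j hij
    simp only [Equiv.trans_apply, Fin.revPerm_apply]
    exact hy _ _ (Fin.rev_lt_rev.mpr hij)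
  have hsort : Fin.revPerm.trans ρ = Tuple.sort y := by
    rw [Tuple.eq_sort_iff]
    constructor
    · intro i j hij
      rcases eq_or_lt_of_le hij with rfl | hij
      · exact le_rfl
      · exact (hmono i j hij).le
    · intro i j hij heq
      exact absurd heq (hmono i j hij).ne
  show Fin.revPerm.trans (Tuple.sort y) = ρ
  rw [← hsort]
  ext i
  simp

lemma mem_Sset_sortDesc {y : Fin n → ℝ} (hy : Function.Injective y) :
    y ∈ Sset (sortDesc y) := by
  intro i j hij
  show y ((Fin.revPerm.trans (Tuple.sort y)) j) < y ((Fin.revPerm.trans (Tuple.sort y)) i)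
  simp only [Equiv.trans_apply, Fin.revPerm_apply]
  have hle : (y ∘ Tuple.sort y) j.rev ≤ (y ∘ Tuple.sort y) i.rev :=
    Tuple.monotone_sort y (Fin.rev_lt_rev.mpr hij).le
  refine lt_of_le_of_ne hle fun he => ?_
  exact absurd (Fin.rev_injective ((Tuple.sort y).injective (hy he))) hij.ne'

lemma comp_mem_Sset {y : Fin n → ℝ} {ρ : Equiv.Perm (Fin n)} (hy : y ∈ Sset ρ)
    (σ : Equiv.Perm (Fin n)) : (fun i => y ((ρ * σ⁻¹) i)) ∈ Sset σ := by
  intro i j hij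
  simp only [Equiv.Perm.mul_apply, Equiv.Perm.inv_def, Equiv.symm_apply_apply]
  exact hy i j hij

def Fchoq (ν : Finset (Fin n) → ℝ) (h : ℝ → ℝ) (y : Fin n → ℝ) : ℝ :=
  ∑ ρ : Equiv.Perm (Fin n), (Sset ρ).indicator (fun z => h (choquetPerm ν ρ z)) y

def Gchoq (ν : Finset (Fin n) → ℝ) (h : ℝ → ℝ) (σ : Equiv.Perm (Fin n)) (y : Fin n → ℝ) : ℝ :=
  ∑ ρ : Equiv.Perm (Fin n), (Sset ρ).indicator
    (fun z => Fchoq ν h (fun i => z ((ρ * σ⁻¹) i))) y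

lemma measurable_choquetPerm (ν : Finset (Fin n) → ℝ) (ρ : Equiv.Perm (Fin n)) :
    Measurable (choquetPerm ν ρ) :=
  Finset.measurable_sum _ fun i _ => (measurable_pi_apply (ρ i)).const_mul _

lemma measurable_Fchoq (ν : Finset (Fin n) → ℝ) {h : ℝ → ℝ} (hh : Measurable h) :
    Measurable (Fchoq ν h) :=
  Finset.measurable_sum _ fun ρ _ =>
    ((hh.comp (measurable_choquetPerm ν ρ)).indicator (measurableSet_Sset ρ))

lemma measurable_Gchoq (ν : Finset (Fin n) → ℝ) {h : ℝ → ℝ} (hh : Measurable h)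
    (σ : Equiv.Perm (Fin n)) : Measurable (Gchoq ν h σ) :=
  Finset.measurable_sum _ fun ρ _ =>
    (((measurable_Fchoq ν hh).comp
      (measurable_pi_lambda _ fun i => measurable_pi_apply _)).indicator (measurableSet_Sset ρ))

lemma Fchoq_eq_of_mem (ν : Finset (Fin n) → ℝ) (h : ℝ → ℝ) {y : Fin n → ℝ}
    {ρ : Equiv.Perm (Fin n)} (hy : y ∈ Sset ρ) :
    Fchoq ν h y = h (choquetPerm ν ρ y) := by
  rw [Fchoq, Finset.sum_eq_single ρ]
  · rw [Set.indicator_of_mem hy]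
  · intro ρ' _ hne
    rw [Set.indicator_of_notMem]
    intro hy'
    exact hne (by rw [← sortDesc_eq_of_mem hy', sortDesc_eq_of_mem hy])
  · simp

lemma Gchoq_eq_of_mem (ν : Finset (Fin n) → ℝ) (h : ℝ → ℝ) {y : Fin n → ℝ}
    {ρ : Equiv.Perm (Fin n)} (hy : y ∈ Sset ρ) (σ : Equiv.Perm (Fin n)) :
    Gchoq ν h σ y = Fchoq ν h (fun i => y ((ρ * σ⁻¹) i)) := by
  rw [Gchoq, Finset.sum_eq_single ρ]
  · rw [Set.indicator_of_mem hy]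
  · intro ρ' _ hne
    rw [Set.indicator_of_notMem]
    intro hy'
    exact hne (by rw [← sortDesc_eq_of_mem hy', sortDesc_eq_of_mem hy])
  · simp

lemma Ysig_eq {ν : Finset (Fin n) → ℝ} {σ ρ : Equiv.Perm (Fin n)} {X : Fin n → Ω → ℝ} {ω : Ω}
    (hω : (fun i => X i ω) ∈ Sset ρ) :
    Ysig ν σ X ω = choquetPerm ν σ (fun k => (fun j => X j ω) ((ρ * σ⁻¹) k)) := by
  unfold Ysig choquetPerm
  refine Finset.sum_congr rfl fun i _ => ?_
  congr 1
  have hlt : (i : ℕ) < n := i.isLt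
  rw [orderStat]
  have hcond : n - (i : ℕ) - 1 < n ∧ 1 ≤ n - (i : ℕ) := ⟨by omega, by omega⟩
  rw [dif_pos hcond]
  have hρ : sortDesc (fun j => X j ω) = ρ := sortDesc_eq_of_mem hω
  have h1 : (ρ * σ⁻¹) (σ i) = ρ i := by simp
  show _ = X ((ρ * σ⁻¹) (σ i)) ω
  rw [h1, ← hρ]
  show _ = X ((Fin.revPerm.trans (Tuple.sort (fun j => X j ω))) i) ω
  simp only [Equiv.trans_apply, Fin.revPerm_apply]
  congr 2

lemma sum_indicator_Sset (f : (Fin n → ℝ) → ℝ) (y : Fin n → ℝ) :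
    ∑ ρ : Equiv.Perm (Fin n), (Sset ρ).indicator f y
      = (⋃ ρ : Equiv.Perm (Fin n), Sset ρ).indicator f y := by
  by_cases hy : y ∈ ⋃ ρ : Equiv.Perm (Fin n), Sset ρ
  · obtain ⟨ρ, hρ⟩ := Set.mem_iUnion.mp hy
    rw [Set.indicator_of_mem hy, Finset.sum_eq_single ρ]
    · rw [Set.indicator_of_mem hρ]
    · intro ρ' _ hne
      rw [Set.indicator_of_notMem]
      intro hy'
      exact hne (by rw [← sortDesc_eq_of_mem hy', sortDesc_eq_of_mem hρ])
    · simp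
  · rw [Set.indicator_of_notMem hy]
    rw [Set.mem_iUnion] at hy
    push_neg at hy
    exact Finset.sum_eq_zero fun ρ _ => Set.indicator_of_notMem (hy ρ) _


/-- `E[h(Y_ν)] = (1/n!) · Σ_{σ ∈ 𝔖_n} E[h(Y_ν^σ)]`. -/
theorem statement0 {Ω : Type*} [MeasurableSpace Ω] {n : ℕ} (hn : 0 < n)
    (P : Measure Ω) [IsProbabilityMeasure P]
    (ν : Finset (Fin n) → ℝ) (hν0 : ν ∅ = 0) (hν01 : ∀ T, ν T ∈ Set.Icc (0:ℝ) 1)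
    (X : Fin n → Ω → ℝ) (hmeas : ∀ i, Measurable (X i))
    (hindep : iIndepFun X P)
    (μ : Measure ℝ) (hac : μ ≪ volume) (hdist : ∀ i, Measure.map (X i) P = μ)
    (h : ℝ → ℝ) (hh : Measurable h)
    (hint : Integrable (fun ω => h (choquet ν (fun i => X i ω))) P) :
    ∫ ω, h (choquet ν (fun i => X i ω)) ∂P
      = (1 / (Nat.factorial n : ℝ)) *
          ∑ σ : Equiv.Perm (Fin n), ∫ ω, h (Ysig ν σ X ω) ∂P := by
  classical
  have hμprob : IsProbabilityMeasure μ := by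
    rw [← hdist ⟨0, hn⟩]
    exact Measure.isProbabilityMeasure_map (hmeas _).aemeasurable
  set x : Ω → (Fin n → ℝ) := fun ω i => X i ω with hxdef
  have hxmeas : Measurable x := measurable_pi_lambda _ hmeas
  set π : Measure (Fin n → ℝ) := Measure.pi (fun _ : Fin n => μ) with hπdef
  -- joint law of any permuted family is the product measure
  have hjoint : ∀ τ : Equiv.Perm (Fin n),
      Measure.map (fun ω i => X (τ i) ω) P = π := by
    intro τ
    refine (Measure.pi_eq fun s hs => ?_).symm
    rw [Measure.map_apply (measurable_pi_lambda _ fun i => hmeas _)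
      (MeasurableSet.univ_pi hs)]
    have hset : (fun ω i => X (τ i) ω) ⁻¹' Set.pi Set.univ s
        = ⋂ j ∈ Finset.univ, X j ⁻¹' (s (τ.symm j)) := by
      ext ω
      simp only [Set.mem_preimage, Set.mem_univ_pi, Set.mem_iInter, Finset.mem_univ,
        forall_true_left]
      constructor
      · intro H j
        have := H (τ.symm j); simpa using this
      · intro H i
        have := H (τ i); simpa using this
    rw [hset,
      hindep.measure_inter_preimage_eq_mul Finset.univ (fun j _ => hs (τ.symm j))]
    have hXp : ∀ j : Fin n, P (X j ⁻¹' s (τ.symm j)) = μ (s (τ.symm j)) := fun j => by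
      rw [← hdist j, Measure.map_apply (hmeas j) (hs _)]
    simp_rw [hXp]
    exact Equiv.prod_comp τ.symm (fun i => μ (s i))
  have hπ : Measure.map x P = π := by
    have := hjoint 1
    simpa using this
  -- the union of the strict-descent regions has full measure
  set U : Set (Fin n → ℝ) := ⋃ ρ : Equiv.Perm (Fin n), Sset ρ with hUdef
  have hUmeas : MeasurableSet U := MeasurableSet.iUnion fun ρ => measurableSet_Sset ρ
  have hdiag : ∀ i j : Fin n, i ≠ j → P {ω | X i ω = X j ω} = 0 := by
    intro i j hij
    have hind : IndepFun (X i) (X j) P := hindep.indepFun hij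
    have hmap : Measure.map (fun ω => (X i ω, X j ω)) P = μ.prod μ := by
      rw [(indepFun_iff_map_prod_eq_prod_map_map (hmeas i).aemeasurable
        (hmeas j).aemeasurable).mp hind, hdist i, hdist j]
    have hms : MeasurableSet {p : ℝ × ℝ | p.1 = p.2} :=
      measurableSet_eq_fun measurable_fst measurable_snd
    have hset : {ω | X i ω = X j ω}
        = (fun ω => (X i ω, X j ω)) ⁻¹' {p : ℝ × ℝ | p.1 = p.2} := rfl
    rw [hset, ← Measure.map_apply ((hmeas i).prodMk (hmeas j)) hms, hmap,
      Measure.prod_apply hms]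
    have hsing : ∀ a : ℝ, μ {a} = 0 := fun a => hac (measure_singleton a)
    simp [hsing]
  have hUc : π Uᶜ = 0 := by
    have hsub : Uᶜ ⊆ ⋃ (i : Fin n), ⋃ (j : Fin n), ⋃ (_ : i ≠ j),
        {y : Fin n → ℝ | y i = y j} := by
      intro y hy
      by_contra hy2
      simp only [Set.mem_iUnion, not_exists, Set.mem_setOf_eq] at hy2
      have hinj : Function.Injective y := by
        intro a b hab
        by_contra hne
        exact hy2 a b hne hab
      exact hy (Set.mem_iUnion.mpr ⟨sortDesc y, mem_Sset_sortDesc hinj⟩)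
    refine measure_mono_null hsub ?_
    refine measure_iUnion_null fun i => measure_iUnion_null fun j =>
      measure_iUnion_null fun hij => ?_
    rw [← hπ, Measure.map_apply hxmeas
      (measurableSet_eq_fun (measurable_pi_apply i) (measurable_pi_apply j))]
    exact hdiag i j hij
  have haeU : ∀ᵐ ω ∂P, x ω ∈ U := by
    rw [ae_iff]
    have : {ω | ¬ x ω ∈ U} = x ⁻¹' Uᶜ := rfl
    rw [this, ← Measure.map_apply hxmeas hUmeas.compl, hπ]
    exact hUc
  -- abbreviations
  set F : (Fin n → ℝ) → ℝ := Fchoq ν h with hFdef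
  have hFmeas : Measurable F := measurable_Fchoq ν hh
  -- LHS identification
  have hFx : ∀ᵐ ω ∂P, h (choquet ν (fun i => X i ω)) = F (x ω) := by
    filter_upwards [haeU] with ω hω
    obtain ⟨ρ, hρ⟩ := Set.mem_iUnion.mp hω
    rw [hFdef, Fchoq_eq_of_mem ν h hρ, choquet, sortDesc_eq_of_mem hρ]
  have hintFx : Integrable (fun ω => F (x ω)) P := hint.congr hFx
  have hintFπ : Integrable F π := by
    rw [← hπ]
    exact (integrable_map_measure hFmeas.aestronglyMeasurable hxmeas.aemeasurable).mpr hintFx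
  have hLHS : ∫ ω, h (choquet ν (fun i => X i ω)) ∂P = ∫ y, F y ∂π := by
    rw [integral_congr_ae hFx, ← hπ,
      integral_map hxmeas.aemeasurable hFmeas.aestronglyMeasurable]
  -- permutation maps preserve π
  have hmτ : ∀ τ : Equiv.Perm (Fin n),
      Measurable (fun y : Fin n → ℝ => fun i => y (τ i)) :=
    fun τ => measurable_pi_lambda _ fun i => measurable_pi_apply _
  have hmapτ : ∀ τ : Equiv.Perm (Fin n),
      Measure.map (fun y : Fin n → ℝ => fun i => y (τ i)) π = π := by
    intro τ
    rw [← hπ, Measure.map_map (hmτ τ) hxmeas]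
    have hcomp : ((fun y : Fin n → ℝ => fun i => y (τ i)) ∘ x) = fun ω i => X (τ i) ω := rfl
    rw [hcomp]
    exact (hjoint τ).trans hπ.symm
  have hintFτ : ∀ τ : Equiv.Perm (Fin n),
      Integrable (fun y : Fin n → ℝ => F (fun i => y (τ i))) π := by
    intro τ
    have h1 : Integrable F (Measure.map (fun y : Fin n → ℝ => fun i => y (τ i)) π) := by
      rw [hmapτ τ]; exact hintFπ
    have h2 : AEStronglyMeasurable F
        (Measure.map (fun y : Fin n → ℝ => fun i => y (τ i)) π) := by
      rw [hmapτ τ]; exact hFmeas.aestronglyMeasurable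
    exact (integrable_map_measure h2 (hmτ τ).aemeasurable).mp h1
  have hintegralτ : ∀ τ : Equiv.Perm (Fin n),
      ∫ y, F (fun i => y (τ i)) ∂π = ∫ y, F y ∂π := by
    intro τ
    have h2 : AEStronglyMeasurable F
        (Measure.map (fun y : Fin n → ℝ => fun i => y (τ i)) π) := by
      rw [hmapτ τ]; exact hFmeas.aestronglyMeasurable
    rw [← integral_map (hmτ τ).aemeasurable h2, hmapτ τ]
  -- indicator pieces
  have hindint : ∀ (ρ τ : Equiv.Perm (Fin n)),
      Integrable ((Sset ρ).indicator
        (fun y : Fin n → ℝ => F (fun i => y (τ i)))) π :=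
    fun ρ τ => (hintFτ τ).indicator (measurableSet_Sset ρ)
  -- Ysig identification
  have hYG : ∀ σ : Equiv.Perm (Fin n),
      ∀ᵐ ω ∂P, h (Ysig ν σ X ω) = Gchoq ν h σ (x ω) := by
    intro σ
    filter_upwards [haeU] with ω hω
    obtain ⟨ρ, hρ⟩ := Set.mem_iUnion.mp hω
    rw [Gchoq_eq_of_mem ν h hρ σ,
      Fchoq_eq_of_mem ν h (comp_mem_Sset hρ σ), Ysig_eq hρ]
  have hGπ : ∀ σ : Equiv.Perm (Fin n),
      ∫ ω, h (Ysig ν σ X ω) ∂P = ∫ y, Gchoq ν h σ y ∂π := by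
    intro σ
    rw [integral_congr_ae (hYG σ), ← hπ,
      integral_map hxmeas.aemeasurable (measurable_Gchoq ν hh σ).aestronglyMeasurable]
  -- integral of Gchoq as a sum of indicator integrals
  have hGsum : ∀ σ : Equiv.Perm (Fin n),
      ∫ y, Gchoq ν h σ y ∂π
        = ∑ ρ : Equiv.Perm (Fin n),
            ∫ y, (Sset ρ).indicator
              (fun z : Fin n → ℝ => F (fun i => z ((ρ * σ⁻¹) i))) y ∂π := by
    intro σ
    rw [← integral_finset_sum _ (fun ρ _ => hindint ρ (ρ * σ⁻¹))]
    rfl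
  -- the big double-sum computation
  have hsum : ∑ σ : Equiv.Perm (Fin n), ∫ ω, h (Ysig ν σ X ω) ∂P
      = (n.factorial : ℝ) * ∫ y, F y ∂π := by
    calc ∑ σ : Equiv.Perm (Fin n), ∫ ω, h (Ysig ν σ X ω) ∂P
        = ∑ σ : Equiv.Perm (Fin n), ∑ ρ : Equiv.Perm (Fin n),
            ∫ y, (Sset ρ).indicator
              (fun z : Fin n → ℝ => F (fun i => z ((ρ * σ⁻¹) i))) y ∂π := by
          refine Finset.sum_congr rfl fun σ _ => ?_
          rw [hGπ σ, hGsum σ]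
      _ = ∑ ρ : Equiv.Perm (Fin n), ∑ σ : Equiv.Perm (Fin n),
            ∫ y, (Sset ρ).indicator
              (fun z : Fin n → ℝ => F (fun i => z ((ρ * σ⁻¹) i))) y ∂π :=
          Finset.sum_comm
      _ = ∑ ρ : Equiv.Perm (Fin n), ∑ τ : Equiv.Perm (Fin n),
            ∫ y, (Sset ρ).indicator
              (fun z : Fin n → ℝ => F (fun i => z (τ i))) y ∂π := by
          refine Finset.sum_congr rfl fun ρ _ => ?_
          exact Equiv.sum_comp ((Equiv.inv (Equiv.Perm (Fin n))).trans
            (Equiv.mulLeft ρ))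
            (fun τ => ∫ y, (Sset ρ).indicator
              (fun z : Fin n → ℝ => F (fun i => z (τ i))) y ∂π)
      _ = ∑ τ : Equiv.Perm (Fin n), ∑ ρ : Equiv.Perm (Fin n),
            ∫ y, (Sset ρ).indicator
              (fun z : Fin n → ℝ => F (fun i => z (τ i))) y ∂π :=
          Finset.sum_comm
      _ = ∑ τ : Equiv.Perm (Fin n), ∫ y, F (fun i => y (τ i)) ∂π := by
          refine Finset.sum_congr rfl fun τ _ => ?_
          rw [← integral_finset_sum _ (fun ρ _ => hindint ρ τ)]
          refine integral_congr_ae ?_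
          have hnull : ∀ᵐ y ∂π, y ∈ U := by
            rw [ae_iff]
            exact measure_mono_null (fun y hy => by simpa using hy) hUc
          filter_upwards [hnull] with y hyU
          rw [sum_indicator_Sset, Set.indicator_of_mem hyU]
      _ = ∑ _τ : Equiv.Perm (Fin n), ∫ y, F y ∂π :=
          Finset.sum_congr rfl fun τ _ => hintegralτ τ
      _ = (n.factorial : ℝ) * ∫ y, F y ∂π := by
          rw [Finset.sum_const, Finset.card_univ, Fintype.card_perm, Fintype.card_fin,
            nsmul_eq_mul]
  rw [hLHS, hsum]
  have hfac : (n.factorial : ℝ) ≠ 0 := Nat.cast_ne_zero.mpr n.factorial_ne_zero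
  field_simp

end ChoquetPaper
end
end

section
/- Let r ≥ 1 be an integer and suppose E[|X_1|^r] < ∞. Then for any game ν on N, E[Y_ν^r] = (1/n!) · Σ_{σ ∈ 𝔖_n} Σ_{k_1,…,k_r = 1}^n (Π_{i=1}^r p_{k_i}^{ν,σ}) · E[Π_{i=1}^r X_{n−k_i+1:n}]. -/
open MeasureTheory ProbabilityTheory Finset

noncomputable section

namespace ChoquetPaper

variable {n : ℕ} {Ω : Type*}

section Aux

variable {n : ℕ} {Ω : Type*}

lemma measurableSet_sort_eq [MeasurableSpace Ω] (Y : Fin n → Ω → ℝ) (hY : ∀ i, Measurable (Y i))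
    (π : Equiv.Perm (Fin n)) :
    MeasurableSet {ω | Tuple.sort (fun j => Y j ω) = π} := by
  have hset : {ω | Tuple.sort (fun j => Y j ω) = π}
      = (⋂ (i : Fin n) (j : Fin n) (_ : i ≤ j), {ω | Y (π i) ω ≤ Y (π j) ω})
        ∩ ⋂ (i : Fin n) (j : Fin n) (_ : i < j) (_ : ¬ π i < π j),
            {ω | Y (π i) ω = Y (π j) ω}ᶜ := by
    ext ω
    simp only [Set.mem_setOf_eq, Set.mem_inter_iff, Set.mem_iInter, Set.mem_compl_iff]
    constructor
    · intro h
      obtain ⟨hmono, hstrict⟩ := (Tuple.eq_sort_iff).mp h.symm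
      exact ⟨fun i j hij => hmono hij, fun i j hij hne habs => hne (hstrict i j hij habs)⟩
    · rintro ⟨h1, h2⟩
      refine ((Tuple.eq_sort_iff).mpr ⟨fun i j hij => ?_, fun i j hij heq => ?_⟩).symm
      · exact h1 i j hij
      · by_contra hlt
        exact h2 i j hij hlt heq
  rw [hset]
  exact MeasurableSet.inter
    (MeasurableSet.iInter fun i => MeasurableSet.iInter fun j => MeasurableSet.iInter fun _ =>
      measurableSet_le (hY _) (hY _))
    (MeasurableSet.iInter fun i => MeasurableSet.iInter fun j => MeasurableSet.iInter fun _ =>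
      MeasurableSet.iInter fun _ => (measurableSet_eq_fun (hY _) (hY _)).compl)

lemma measurable_sortApply [MeasurableSpace Ω] (Y : Fin n → Ω → ℝ) (hY : ∀ i, Measurable (Y i))
    (g : Equiv.Perm (Fin n) → Ω → ℝ) (hg : ∀ π, Measurable (g π)) :
    Measurable (fun ω => g (Tuple.sort (fun j => Y j ω)) ω) := by
  have hrw : (fun ω => g (Tuple.sort (fun j => Y j ω)) ω)
      = fun ω => ∑ π : Equiv.Perm (Fin n),
          if Tuple.sort (fun j => Y j ω) = π then g π ω else 0 := by
    funext ω
    rw [Finset.sum_eq_single (Tuple.sort (fun j => Y j ω))]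
    · simp
    · intro b _ hb; exact if_neg (Ne.symm hb)
    · intro h; exact absurd (Finset.mem_univ _) h
  rw [hrw]
  exact Finset.measurable_sum _ fun π _ =>
    Measurable.ite (measurableSet_sort_eq Y hY π) (hg π) measurable_const

lemma measurable_orderStat [MeasurableSpace Ω] (X : Fin n → Ω → ℝ) (hmeas : ∀ i, Measurable (X i))
    (m : ℕ) : Measurable (orderStat X m) := by
  by_cases h : m - 1 < n ∧ 1 ≤ m
  · have hrw : orderStat X m
        = fun ω => (fun π (ω : Ω) => X (π ⟨m - 1, h.1⟩) ω) (Tuple.sort (fun j => X j ω)) ω := by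
      funext ω; rw [orderStat, dif_pos h]
    rw [hrw]
    exact measurable_sortApply X hmeas (fun π (ω : Ω) => X (π ⟨m - 1, h.1⟩) ω) fun π => hmeas _
  · have hrw : orderStat X m = fun _ => (0 : ℝ) := by funext ω; rw [orderStat, dif_neg h]
    rw [hrw]; exact measurable_const

lemma measurable_choquetComp [MeasurableSpace Ω] (ν : Finset (Fin n) → ℝ)
    (Y : Fin n → Ω → ℝ) (hY : ∀ i, Measurable (Y i)) :
    Measurable (fun ω => choquet ν (fun i => Y i ω)) := by
  have hrw : (fun ω => choquet ν (fun i => Y i ω))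
      = fun ω => (fun π (ω : Ω) => choquetPerm ν (Fin.revPerm.trans π) (fun i => Y i ω))
          (Tuple.sort (fun j => Y j ω)) ω := rfl
  rw [hrw]
  refine measurable_sortApply Y hY
    (fun π (ω : Ω) => choquetPerm ν (Fin.revPerm.trans π) (fun i => Y i ω)) fun π => ?_
  unfold choquetPerm
  exact Finset.measurable_sum _ fun i _ => measurable_const.mul (hY _)

lemma sort_perm_apply {x : Fin n → ℝ} (hx : Function.Injective x)
    (τ : Equiv.Perm (Fin n)) (i : Fin n) :
    τ (Tuple.sort (fun j => x (τ j)) i) = Tuple.sort x i := by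
  have h := congrFun (Tuple.comp_perm_comp_sort_eq_comp_sort (σ := τ) (f := x)) i
  exact hx h

lemma key_pointwise (ν : Finset (Fin n) → ℝ) (x : Fin n → ℝ) (hx : Function.Injective x) (r : ℕ) :
    ∑ τ : Equiv.Perm (Fin n), (choquet ν (fun i => x (τ i))) ^ r
      = ∑ σ : Equiv.Perm (Fin n),
          (∑ i : Fin n, (nuSig ν σ ((i : ℕ) + 1) - nuSig ν σ (i : ℕ))
            * x (Tuple.sort x (Fin.rev i))) ^ r := by
  have hinj : Function.Injective
      (fun τ : Equiv.Perm (Fin n) => sortDesc (fun i => x (τ i))) := by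
    intro τ₁ τ₂ h
    have hs : Tuple.sort (fun j => x (τ₁ j)) = Tuple.sort (fun j => x (τ₂ j)) := by
      apply Equiv.ext; intro i
      have := congrArg (fun e : Equiv.Perm (Fin n) => e (Fin.rev i)) h
      simpa [sortDesc, Fin.rev_rev] using this
    apply Equiv.ext; intro j
    obtain ⟨i, rfl⟩ := (Tuple.sort (fun j => x (τ₁ j))).surjective j
    calc τ₁ (Tuple.sort (fun j => x (τ₁ j)) i) = Tuple.sort x i := sort_perm_apply hx τ₁ i
      _ = τ₂ (Tuple.sort (fun j => x (τ₂ j)) i) := (sort_perm_apply hx τ₂ i).symm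
      _ = τ₂ (Tuple.sort (fun j => x (τ₁ j)) i) := by rw [hs]
  refine Fintype.sum_bijective _ (Finite.injective_iff_bijective.mp hinj) _ _ fun τ => ?_
  congr 1
  unfold choquet choquetPerm
  refine Finset.sum_congr rfl fun i _ => ?_
  congr 1
  show x (τ ((sortDesc fun j => x (τ j)) i)) = x (Tuple.sort x (Fin.rev i))
  have : (sortDesc fun j => x (τ j)) i = Tuple.sort (fun j => x (τ j)) (Fin.rev i) := by
    simp [sortDesc]
  rw [this]
  exact congrArg x (sort_perm_apply hx τ (Fin.rev i))

lemma orderStat_eq_sort (X : Fin n → Ω → ℝ) (i : Fin n) (ω : Ω) :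
    orderStat X (n - (i : ℕ)) ω = X (Tuple.sort (fun j => X j ω) (Fin.rev i)) ω := by
  have hi := i.isLt
  have h : n - (i : ℕ) - 1 < n ∧ 1 ≤ n - (i : ℕ) := by omega
  have hidx : (⟨n - (i : ℕ) - 1, h.1⟩ : Fin n) = Fin.rev i := by
    apply Fin.ext
    simp only [Fin.val_rev]
    omega
  rw [orderStat, dif_pos h, hidx]

lemma prod_le_sum_pow {r : ℕ} (hr : 1 ≤ r) (c : Fin r → ℝ) (hc : ∀ i, 0 ≤ c i) :
    ∏ i, c i ≤ ∑ i, c i ^ r := by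
  have hne : (Finset.univ : Finset (Fin r)).Nonempty := ⟨⟨0, hr⟩, Finset.mem_univ _⟩
  obtain ⟨i0, -, hi0⟩ := Finset.exists_mem_eq_sup' hne c
  calc ∏ i, c i ≤ ∏ _i : Fin r, c i0 :=
        Finset.prod_le_prod (fun i _ => hc i)
          (fun i _ => by rw [← hi0]; exact Finset.le_sup' c (Finset.mem_univ i))
    _ = c i0 ^ r := by rw [Finset.prod_const, Finset.card_univ, Fintype.card_fin]
    _ ≤ ∑ i, c i ^ r :=
        Finset.single_le_sum (fun i _ => pow_nonneg (hc i) r) (Finset.mem_univ i0)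

end Aux

/-- expansion of the `r`-th raw moment of the Choquet integral as a sum over
permutations and multi-indices of product moments of order statistics. -/
theorem statement2 {Ω : Type*} [MeasurableSpace Ω] {n : ℕ} (hn : 0 < n)
    (P : Measure Ω) [IsProbabilityMeasure P]
    (ν : Finset (Fin n) → ℝ) (hν0 : ν ∅ = 0) (hν01 : ∀ T, ν T ∈ Set.Icc (0:ℝ) 1)
    (X : Fin n → Ω → ℝ) (hmeas : ∀ i, Measurable (X i))
    (hindep : iIndepFun X P)
    (μ : Measure ℝ) (hac : μ ≪ volume) (hdist : ∀ i, Measure.map (X i) P = μ)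
    (r : ℕ) (hr : 1 ≤ r)
    (hint : Integrable (fun ω => |X ⟨0, hn⟩ ω| ^ r) P) :
    ∫ ω, (choquet ν (fun i => X i ω)) ^ r ∂P
      = (1 / (Nat.factorial n : ℝ)) *
          ∑ σ : Equiv.Perm (Fin n), ∑ k : Fin r → Fin n,
            (∏ i : Fin r, (nuSig ν σ ((k i : ℕ) + 1) - nuSig ν σ ((k i : ℕ)))) *
              ∫ ω, ∏ i : Fin r, orderStat X (n - (k i : ℕ)) ω ∂P := by
  classical
  -- basic instances and facts
  have hμprob : IsProbabilityMeasure μ := by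
    rw [← hdist ⟨0, hn⟩]
    exact Measure.isProbabilityMeasure_map (hmeas _).aemeasurable
  -- integrability of |X j|^r
  have habs : Measurable (fun t : ℝ => |t| ^ r) := (measurable_abs.pow_const r)
  have hXr : ∀ j, Integrable (fun ω => |X j ω| ^ r) P := by
    intro j
    have h0 : Integrable ((fun t : ℝ => |t| ^ r) ∘ (X ⟨0, hn⟩)) P := hint
    rw [← integrable_map_measure habs.aestronglyMeasurable (hmeas _).aemeasurable, hdist,
      ← hdist j, integrable_map_measure habs.aestronglyMeasurable (hmeas _).aemeasurable] at h0
    exact h0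
  -- integrability of (∑ |X j|)^r
  have hSr : Integrable (fun ω => (∑ j, |X j ω|) ^ r) P := by
    have hexp : (fun ω => (∑ j, |X j ω|) ^ r)
        = fun ω => ∑ k : Fin r → Fin n, ∏ i, |X (k i) ω| := by
      funext ω
      rw [Finset.sum_pow' Finset.univ (fun j => |X j ω|) r, Fintype.piFinset_univ]
    rw [hexp]
    refine integrable_finset_sum _ fun k _ => ?_
    refine Integrable.mono' (integrable_finset_sum Finset.univ fun i _ => hXr (k i)) ?_ ?_
    · exact (Finset.measurable_prod Finset.univ
        fun i _ => (hmeas (k i)).abs).aestronglyMeasurable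
    · filter_upwards with ω
      rw [Real.norm_eq_abs, abs_of_nonneg (Finset.prod_nonneg fun i _ => abs_nonneg _)]
      exact prod_le_sum_pow hr _ (fun i => abs_nonneg _)
  -- pointwise bounds
  have hordle : ∀ (m : ℕ) (ω : Ω), |orderStat X m ω| ≤ ∑ j, |X j ω| := by
    intro m ω
    rw [orderStat]
    split_ifs with h
    · exact Finset.single_le_sum (f := fun j => |X j ω|) (fun j _ => abs_nonneg _)
        (Finset.mem_univ _)
    · simpa using Finset.sum_nonneg fun j (_ : j ∈ Finset.univ) => abs_nonneg (X j ω)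
  have hp1 : ∀ (σ : Equiv.Perm (Fin n)) (i : ℕ), |nuSig ν σ (i + 1) - nuSig ν σ i| ≤ 1 := by
    intro σ i
    have h1 := hν01 ((Finset.univ.filter (fun j : Fin n => (j : ℕ) < i + 1)).image σ)
    have h2 := hν01 ((Finset.univ.filter (fun j : Fin n => (j : ℕ) < i)).image σ)
    rw [Set.mem_Icc] at h1 h2
    rw [abs_sub_le_iff]
    unfold nuSig
    constructor <;> linarith [h1.1, h1.2, h2.1, h2.2]
  have hchoq_le : ∀ y : Fin n → ℝ, |choquet ν y| ≤ ∑ j, |y j| := by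
    intro y
    unfold choquet choquetPerm
    refine (Finset.abs_sum_le_sum_abs _ _).trans ?_
    calc ∑ i : Fin n, |(nuSig ν (sortDesc y) ((i : ℕ) + 1) - nuSig ν (sortDesc y) (i : ℕ))
            * y (sortDesc y i)|
        ≤ ∑ i : Fin n, |y (sortDesc y i)| := Finset.sum_le_sum fun i _ => by
          rw [abs_mul]
          exact mul_le_of_le_one_left (abs_nonneg _) (hp1 _ _)
      _ = ∑ j, |y j| := Equiv.sum_comp (sortDesc y) (fun j => |y j|)
  -- integrability of the order-statistics products
  have hterm : ∀ k : Fin r → Fin n,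
      Integrable (fun ω => ∏ i : Fin r, orderStat X (n - (k i : ℕ)) ω) P := by
    intro k
    refine Integrable.mono' (hSr.const_mul (r : ℝ)) ?_ ?_
    · exact (Finset.measurable_prod Finset.univ
        fun i _ => measurable_orderStat X hmeas _).aestronglyMeasurable
    · filter_upwards with ω
      rw [Real.norm_eq_abs, Finset.abs_prod]
      calc ∏ i : Fin r, |orderStat X (n - (k i : ℕ)) ω|
          ≤ ∑ i : Fin r, |orderStat X (n - (k i : ℕ)) ω| ^ r :=
            prod_le_sum_pow hr _ fun i => abs_nonneg _
        _ ≤ ∑ _i : Fin r, (∑ j, |X j ω|) ^ r := Finset.sum_le_sum fun i _ =>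
            pow_le_pow_left₀ (abs_nonneg _) (hordle _ ω) r
        _ = (r : ℝ) * (∑ j, |X j ω|) ^ r := by
            rw [Finset.sum_const, Finset.card_univ, Fintype.card_fin, nsmul_eq_mul]
  -- integrability of permuted Choquet powers
  have hchoqint : ∀ τ : Equiv.Perm (Fin n),
      Integrable (fun ω => (choquet ν (fun i => X (τ i) ω)) ^ r) P := by
    intro τ
    refine Integrable.mono' hSr ?_ ?_
    · exact ((measurable_choquetComp ν (fun i => X (τ i))
        (fun i => hmeas _)).pow_const r).aestronglyMeasurable
    · filter_upwards with ω
      rw [Real.norm_eq_abs, abs_pow]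
      refine pow_le_pow_left₀ (abs_nonneg _) ?_ r
      calc |choquet ν fun i => X (τ i) ω| ≤ ∑ j, |X (τ j) ω| := hchoq_le _
        _ = ∑ j, |X j ω| := Equiv.sum_comp τ (fun j => |X j ω|)
  -- a.s. injectivity of the sample
  have hXinj : ∀ᵐ ω ∂P, Function.Injective (fun j => X j ω) := by
    have hpair : ∀ i j : Fin n, i ≠ j → P {ω | X i ω = X j ω} = 0 := by
      intro i j hij
      have hind : IndepFun (X i) (X j) P := hindep.indepFun hij
      have hmap2 : Measure.map (fun ω => (X i ω, X j ω)) P = μ.prod μ := by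
        rw [(indepFun_iff_map_prod_eq_prod_map_map (hmeas i).aemeasurable
          (hmeas j).aemeasurable).mp hind, hdist, hdist]
      have hdiag : MeasurableSet {p : ℝ × ℝ | p.1 = p.2} :=
        measurableSet_eq_fun measurable_fst measurable_snd
      have hPe : P {ω | X i ω = X j ω} = (μ.prod μ) {p : ℝ × ℝ | p.1 = p.2} := by
        rw [← hmap2, Measure.map_apply ((hmeas i).prodMk (hmeas j)) hdiag]
        rfl
      rw [hPe, Measure.prod_apply hdiag]
      have hz : ∀ a : ℝ, μ (Prod.mk a ⁻¹' {p : ℝ × ℝ | p.1 = p.2}) = 0 := by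
        intro a
        have hpre : Prod.mk a ⁻¹' {p : ℝ × ℝ | p.1 = p.2} = {a} := by
          ext b; simp [eq_comm]
        rw [hpre]
        exact hac (measure_singleton a)
      have hz0 : ∀ a : ℝ, μ {a} = 0 := fun a => hac (measure_singleton a)
      simp [hz, hz0]
    have hU : P (⋃ (i : Fin n) (j : Fin n) (_ : i ≠ j), {ω | X i ω = X j ω}) = 0 :=
      measure_iUnion_null fun i => measure_iUnion_null fun j =>
        measure_iUnion_null fun hij => hpair i j hij
    rw [ae_iff]
    refine measure_mono_null ?_ hU
    intro ω hω
    simp only [Set.mem_setOf_eq] at hω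
    rw [Function.not_injective_iff] at hω
    obtain ⟨a, b, hab, hne⟩ := hω
    exact Set.mem_iUnion.mpr ⟨a, Set.mem_iUnion.mpr ⟨b, Set.mem_iUnion.mpr ⟨hne, hab⟩⟩⟩
  -- joint law is the product measure, for any permutation of the sample
  have hJm : ∀ τ : Equiv.Perm (Fin n), Measurable (fun ω (i : Fin n) => X (τ i) ω) :=
    fun τ => measurable_pi_lambda _ fun i => hmeas (τ i)
  have hmapJ : ∀ τ : Equiv.Perm (Fin n),
      Measure.map (fun ω (i : Fin n) => X (τ i) ω) P = Measure.pi (fun _ => μ) := by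
    intro τ
    refine (Measure.pi_eq fun s hs => ?_).symm
    rw [Measure.map_apply (hJm τ) (MeasurableSet.univ_pi hs)]
    have hpre : (fun ω (i : Fin n) => X (τ i) ω) ⁻¹' Set.pi Set.univ s
        = ⋂ j, X j ⁻¹' s (τ.symm j) := by
      ext ω
      simp only [Set.mem_preimage, Set.mem_univ_pi, Set.mem_iInter]
      constructor
      · intro h j
        have := h (τ.symm j)
        simpa using this
      · intro h i
        have := h (τ i)
        simpa using this
    rw [hpre, hindep.meas_iInter fun j => ⟨s (τ.symm j), hs _, rfl⟩]
    have hXs : ∀ j, P (X j ⁻¹' s (τ.symm j)) = μ (s (τ.symm j)) := by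
      intro j; rw [← hdist j, Measure.map_apply (hmeas j) (hs _)]
    simp_rw [hXs]
    exact Fintype.prod_equiv τ.symm _ _ fun j => rfl
  have Gmeas : Measurable (fun x : Fin n → ℝ => choquet ν x) :=
    measurable_choquetComp ν (fun i (x : Fin n → ℝ) => x i) (fun i => measurable_pi_apply i)
  have hexch : ∀ τ : Equiv.Perm (Fin n),
      ∫ ω, (choquet ν (fun i => X (τ i) ω)) ^ r ∂P
        = ∫ x, (choquet ν x) ^ r ∂(Measure.pi (fun _ : Fin n => μ)) := by
    intro τ
    rw [← hmapJ τ]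
    exact (integral_map (hJm τ).aemeasurable
      ((Gmeas.pow_const r).aestronglyMeasurable)).symm
  have hfact : (Nat.factorial n : ℝ) ≠ 0 := Nat.cast_ne_zero.mpr (Nat.factorial_ne_zero n)
  calc ∫ ω, (choquet ν fun i => X i ω) ^ r ∂P
      = (1 / (Nat.factorial n : ℝ)) *
          ∑ τ : Equiv.Perm (Fin n), ∫ ω, (choquet ν (fun i => X (τ i) ω)) ^ r ∂P := by
        have h1 : ∀ τ : Equiv.Perm (Fin n),
            ∫ ω, (choquet ν (fun i => X (τ i) ω)) ^ r ∂P
              = ∫ ω, (choquet ν fun i => X i ω) ^ r ∂P := by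
          intro τ
          rw [hexch τ, ← hexch 1]
          simp only [Equiv.Perm.coe_one, id_eq]
        rw [Finset.sum_congr rfl fun τ _ => h1 τ, Finset.sum_const, Finset.card_univ,
          nsmul_eq_mul, Fintype.card_perm, Fintype.card_fin]
        rw [← mul_assoc, one_div, inv_mul_cancel₀ hfact, one_mul]
    _ = (1 / (Nat.factorial n : ℝ)) *
          ∫ ω, ∑ τ : Equiv.Perm (Fin n), (choquet ν (fun i => X (τ i) ω)) ^ r ∂P := by
        rw [integral_finset_sum _ fun τ _ => hchoqint τ]
    _ = (1 / (Nat.factorial n : ℝ)) *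
          ∫ ω, ∑ σ : Equiv.Perm (Fin n), ∑ k : Fin r → Fin n,
            (∏ i : Fin r, (nuSig ν σ ((k i : ℕ) + 1) - nuSig ν σ ((k i : ℕ)))) *
              ∏ i : Fin r, orderStat X (n - (k i : ℕ)) ω ∂P := by
        congr 1
        refine integral_congr_ae ?_
        filter_upwards [hXinj] with ω hω
        rw [key_pointwise ν _ hω r]
        refine Finset.sum_congr rfl fun σ _ => ?_
        have hsum : (∑ i : Fin n, (nuSig ν σ ((i : ℕ) + 1) - nuSig ν σ (i : ℕ))
              * (fun j => X j ω) (Tuple.sort (fun j => X j ω) (Fin.rev i)))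
            = ∑ i : Fin n, (nuSig ν σ ((i : ℕ) + 1) - nuSig ν σ (i : ℕ))
              * orderStat X (n - (i : ℕ)) ω :=
          Finset.sum_congr rfl fun i _ => by rw [orderStat_eq_sort]
        rw [hsum, Finset.sum_pow' Finset.univ _ r, Fintype.piFinset_univ]
        exact Finset.sum_congr rfl fun k _ => Finset.prod_mul_distrib
    _ = (1 / (Nat.factorial n : ℝ)) *
          ∑ σ : Equiv.Perm (Fin n), ∑ k : Fin r → Fin n,
            (∏ i : Fin r, (nuSig ν σ ((k i : ℕ) + 1) - nuSig ν σ ((k i : ℕ)))) *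
              ∫ ω, ∏ i : Fin r, orderStat X (n - (k i : ℕ)) ω ∂P := by
        rw [integral_finset_sum _ fun σ _ =>
          integrable_finset_sum _ fun k _ => (hterm k).const_mul _]
        congr 1
        refine Finset.sum_congr rfl fun σ _ => ?_
        rw [integral_finset_sum _ fun k _ => (hterm k).const_mul _]
        exact Finset.sum_congr rfl fun k _ => integral_const_mul _ _


end ChoquetPaper
end
end

section
/- Let ν be a game on N, let r ≥ 1 be an integer, and let 0 ≤ i_1 ≤ i_2 ≤ ⋯ ≤ i_r ≤ n be integers. With the convention T_{r+1} := N, one has (1/n!) · Σ_{σ ∈ 𝔖_n} Π_{k=1}^r ν_{i_k}^σ = Σ_{T_1 ⊆ ⋯ ⊆ T_r ⊆ N with |T_k| = i_k for all k} Π_{i=1}^r ν(T_i)/C(|T_{i+1}|,|T_i|), where C(a,b) denotes the binomial coefficient. -/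
open MeasureTheory ProbabilityTheory Finset

noncomputable section

namespace ChoquetPaper

variable {n : ℕ} {Ω : Type*}

lemma aux_card_Ilt {n : ℕ} (t : ℕ) (ht : t ≤ n) :
    (Finset.univ.filter (fun j : Fin n => (j : ℕ) < t)).card = t := by
  rw [← Finset.card_range t]
  apply Finset.card_bij (fun (a : Fin n) _ => (a : ℕ))
  · intro a ha; simp only [Finset.mem_filter] at ha; simpa using ha.2
  · intro a _ b _ h; exact Fin.ext h
  · intro b hb
    simp only [Finset.mem_range] at hb
    exact ⟨⟨b, lt_of_lt_of_le hb ht⟩, by simp [hb], rfl⟩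

lemma aux_downset (P : ℕ → Prop) [DecidablePred P] (r t : ℕ) (ht : t ≤ r)
    (hdown : ∀ k l, k ≤ l → l < r → P l → P k) :
    ((Finset.range r).filter P).card = t ↔ ((∀ k < t, P k) ∧ (t < r → ¬ P t)) := by
  constructor
  · intro hcard
    have hsub : (Finset.range r).filter P ⊆ Finset.range t := by
      intro k hk
      simp only [Finset.mem_filter, Finset.mem_range] at hk
      simp only [Finset.mem_range]
      by_contra hkt
      push_neg at hkt
      have hsub2 : Finset.range (k + 1) ⊆ (Finset.range r).filter P := by
        intro l hl
        simp only [Finset.mem_range] at hl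
        simp only [Finset.mem_filter, Finset.mem_range]
        have hlk : l ≤ k := Nat.lt_succ_iff.mp hl
        exact ⟨lt_of_le_of_lt hlk hk.1, hdown l k hlk hk.1 hk.2⟩
      have := Finset.card_le_card hsub2
      simp only [Finset.card_range, hcard] at this
      omega
    have heq : (Finset.range r).filter P = Finset.range t :=
      Finset.eq_of_subset_of_card_le hsub (by rw [hcard, Finset.card_range])
    constructor
    · intro k hk
      have : k ∈ (Finset.range r).filter P := by rw [heq]; simpa using hk
      exact (Finset.mem_filter.mp this).2
    · intro htr hPt
      have : t ∈ (Finset.range r).filter P := by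
        simp only [Finset.mem_filter, Finset.mem_range]; exact ⟨htr, hPt⟩
      rw [heq] at this; simp at this
  · rintro ⟨h1, h2⟩
    have heq : (Finset.range r).filter P = Finset.range t := by
      ext k
      simp only [Finset.mem_filter, Finset.mem_range]
      constructor
      · rintro ⟨hkr, hPk⟩
        by_contra hkt
        push_neg at hkt
        exact h2 (lt_of_le_of_lt hkt hkr) (hdown t k hkt hkr hPk)
      · intro hkt
        exact ⟨lt_of_lt_of_le hkt ht, h1 k hkt⟩
    rw [heq, Finset.card_range]

lemma aux_tele (e : ℕ → ℕ) (hmono : ∀ k, e k ≤ e (k + 1)) :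
    ∀ m, (e 0).factorial *
        ∏ k ∈ Finset.range m, (Nat.choose (e (k + 1)) (e k) * (e (k + 1) - e k).factorial)
      = (e m).factorial := by
  intro m
  induction m with
  | zero => simp
  | succ m ih =>
    rw [Finset.prod_range_succ, ← mul_assoc, ih,
      ← Nat.choose_mul_factorial_mul_factorial (hmono m)]
    ring

lemma aux_card_perm_fiber {α κ : Type*} [Fintype α] [DecidableEq α] [Fintype κ] [DecidableEq κ]
    (β δ : α → κ) (h : ∀ c, Fintype.card {a // β a = c} = Fintype.card {a // δ a = c}) :
    Fintype.card {σ : Equiv.Perm α // δ ∘ ⇑σ = β}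
      = ∏ c, (Fintype.card {a // δ a = c}).factorial := by
  have e : ∀ c, {a // β a = c} ≃ {a // δ a = c} := fun c => Fintype.equivOfCardEq (h c)
  set τ : α ≃ α := Equiv.ofFiberEquiv e with hτdef
  have hτ : ∀ a, δ (τ a) = β a := fun a => Equiv.ofFiberEquiv_map e a
  have hcongr : Fintype.card {σ : Equiv.Perm α // δ ∘ ⇑σ = β}
      = Fintype.card {σ : Equiv.Perm α // δ ∘ ⇑σ = δ} := by
    apply Fintype.card_congr
    refine Equiv.subtypeEquiv (Equiv.mulRight τ⁻¹) fun σ => ?_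
    constructor
    · intro hσ; funext a
      show δ ((σ * τ⁻¹) a) = δ a
      have h1 : (σ * τ⁻¹) a = σ (τ⁻¹ a) := rfl
      have h2 := congrFun hσ (τ⁻¹ a)
      simp only [Function.comp_apply] at h2
      rw [h1, h2, ← hτ (τ⁻¹ a), ← Equiv.Perm.mul_apply, mul_inv_cancel, Equiv.Perm.one_apply]
    · intro hσ; funext x
      show δ (σ x) = β x
      have h1 : σ x = (σ * τ⁻¹) (τ x) := by
        simp [Equiv.Perm.mul_apply]
      have h2 := congrFun hσ (τ x)
      simp only [Function.comp_apply, Equiv.coe_mulRight] at h2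
      rw [h1, h2, hτ x]
  rw [hcongr, DomMulAct.stabilizer_card δ]

lemma aux_scalar (F C P : ℝ) (hF : F ≠ 0) (hC : C ≠ 0) :
    1 / (F * C) * (F * P) = P / C := by
  field_simp

/-- the combinatorial identity
`(1/n!) Σ_σ Π_k ν_{i_k}^σ = Σ_{T_1 ⊆ ⋯ ⊆ T_r, |T_k| = i_k} Π_i ν(T_i)/C(|T_{i+1}|,|T_i|)`. -/
theorem statement4 {n : ℕ} (hn : 0 < n)
    (ν : Finset (Fin n) → ℝ) (hν0 : ν ∅ = 0) (hν01 : ∀ T, ν T ∈ Set.Icc (0:ℝ) 1)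
    (r : ℕ) (hr : 1 ≤ r)
    (i : Fin r → ℕ) (hmono : Monotone i) (hle : ∀ k, i k ≤ n) :
    (1 / (Nat.factorial n : ℝ)) *
        ∑ σ : Equiv.Perm (Fin n), ∏ k : Fin r, nuSig ν σ (i k)
      = ∑ T ∈ Finset.univ.filter
          (fun T : Fin r → Finset (Fin n) =>
            (∀ a b : Fin r, a ≤ b → T a ⊆ T b) ∧ ∀ k : Fin r, (T k).card = i k),
          ∏ k : Fin r,
            ν (T k) /
              (Nat.choose (if h : (k : ℕ) + 1 < r then (T ⟨(k : ℕ) + 1, h⟩).card else n)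
                (T k).card : ℝ) := by
  classical
  set j : ℕ → ℕ := fun k => if h : k < r then i ⟨k, h⟩ else n with hjdef
  have hjmono : ∀ k l, k ≤ l → j k ≤ j l := by
    intro k l hkl
    by_cases hl : l < r
    · have hk : k < r := lt_of_le_of_lt hkl hl
      simp only [hjdef, dif_pos hl, dif_pos hk]
      exact hmono (Fin.mk_le_mk.mpr hkl)
    · by_cases hk : k < r
      · simp only [hjdef, dif_pos hk, dif_neg hl]; exact hle _
      · simp [hjdef, dif_neg hl, dif_neg hk]
  have hjle : ∀ k, j k ≤ n := fun k => by
    by_cases hk : k < r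
    · simp only [hjdef, dif_pos hk]; exact hle _
    · simp [hjdef, dif_neg hk]
  set e : ℕ → ℕ := fun s => match s with | 0 => 0 | k + 1 => j k with hedef
  have he0 : e 0 = 0 := rfl
  have heS : ∀ k, e (k + 1) = j k := fun _ => rfl
  have hemono : ∀ k, e k ≤ e (k + 1) := by
    intro k
    cases k with
    | zero => simp [he0]
    | succ k => rw [heS, heS]; exact hjmono k (k + 1) (Nat.le_succ k)
  have heLast : e (r + 1) = n := by rw [heS]; simp [hjdef]
  have heLe : ∀ k, e k ≤ n := fun k => by
    cases k with
    | zero => simp [he0]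
    | succ k => rw [heS]; exact hjle k
  set Φ : Equiv.Perm (Fin n) → (Fin r → Finset (Fin n)) :=
    fun σ k => (Finset.univ.filter (fun x : Fin n => (x : ℕ) < i k)).image σ with hΦdef
  have hmaps : ∀ σ ∈ (Finset.univ : Finset (Equiv.Perm (Fin n))),
      Φ σ ∈ Finset.univ.filter
        (fun T : Fin r → Finset (Fin n) =>
          (∀ a b : Fin r, a ≤ b → T a ⊆ T b) ∧ ∀ k : Fin r, (T k).card = i k) := by
    intro σ _
    rw [Finset.mem_filter]
    refine ⟨Finset.mem_univ _, fun a b hab => ?_, fun k => ?_⟩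
    · apply Finset.image_subset_image
      intro x hx
      simp only [Finset.mem_filter, Finset.mem_univ, true_and] at hx ⊢
      exact lt_of_lt_of_le hx (hmono hab)
    · show ((Finset.univ.filter (fun x : Fin n => (x : ℕ) < i k)).image σ).card = i k
      rw [Finset.card_image_of_injective _ σ.injective, aux_card_Ilt _ (hle k)]
  have hLHSsum : (∑ σ : Equiv.Perm (Fin n), ∏ k : Fin r, nuSig ν σ (i k))
      = ∑ T ∈ Finset.univ.filter
          (fun T : Fin r → Finset (Fin n) =>
            (∀ a b : Fin r, a ≤ b → T a ⊆ T b) ∧ ∀ k : Fin r, (T k).card = i k),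
          ∑ σ ∈ Finset.univ.filter (fun σ => Φ σ = T), ∏ k : Fin r, nuSig ν σ (i k) :=
    (Finset.sum_fiberwise_of_maps_to hmaps _).symm
  rw [hLHSsum, Finset.mul_sum]
  apply Finset.sum_congr rfl
  intro T hT
  rw [Finset.mem_filter] at hT
  obtain ⟨-, hchain, hcardT⟩ := hT
  -- block data associated to T
  set U : ℕ → Finset (Fin n) := fun k => if h : k < r then T ⟨k, h⟩ else Finset.univ with hUdef
  have hUmono : ∀ k l, k ≤ l → U k ⊆ U l := by
    intro k l hkl
    by_cases hl : l < r
    · have hk : k < r := lt_of_le_of_lt hkl hl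
      simp only [hUdef, dif_pos hl, dif_pos hk]
      exact hchain _ _ (Fin.mk_le_mk.mpr hkl)
    · simp [hUdef, dif_neg hl, Finset.subset_univ]
  have hUcard : ∀ k, (U k).card = j k := by
    intro k
    by_cases hk : k < r
    · simp only [hUdef, hjdef, dif_pos hk]; exact hcardT _
    · simp [hUdef, hjdef, dif_neg hk, Finset.card_univ]
  set W : ℕ → Finset (Fin n) := fun s => match s with | 0 => ∅ | k + 1 => U k with hWdef
  have hW0 : W 0 = ∅ := rfl
  have hWS : ∀ k, W (k + 1) = U k := fun _ => rfl
  have hWmono : ∀ s, W s ⊆ W (s + 1) := by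
    intro s
    cases s with
    | zero => simp [hW0]
    | succ k => rw [hWS, hWS]; exact hUmono k (k + 1) (Nat.le_succ k)
  have hWcard : ∀ s, (W s).card = e s := by
    intro s
    cases s with
    | zero => simp [hW0, he0]
    | succ k => rw [hWS, heS]; exact hUcard k
  set βf : Fin n → ℕ := fun x => ((Finset.range r).filter (fun k => j k ≤ (x : ℕ))).card
    with hβdef
  set δf : Fin n → ℕ := fun x => ((Finset.range r).filter (fun k => x ∉ U k)).card with hδdef
  have hβle : ∀ x, βf x ≤ r := fun x =>
    le_trans (Finset.card_filter_le _ _) (Finset.card_range r).le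
  have hδle : ∀ x, δf x ≤ r := fun x =>
    le_trans (Finset.card_filter_le _ _) (Finset.card_range r).le
  have hβiff : ∀ (x : Fin n) (t : ℕ), t ≤ r →
      (βf x = t ↔ (e t ≤ (x : ℕ) ∧ (x : ℕ) < e (t + 1))) := by
    intro x t ht
    rw [hβdef]
    rw [aux_downset _ r t ht (fun k l hkl hlr hP => le_trans (hjmono k l hkl) hP)]
    constructor
    · rintro ⟨h1, h2⟩
      constructor
      · cases t with
        | zero => simp [he0]
        | succ s => rw [heS]; exact h1 s (Nat.lt_succ_self s)
      · rw [heS]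
        by_cases htr : t < r
        · exact Nat.lt_of_not_le (h2 htr)
        · have htr' : t = r := le_antisymm ht (Nat.le_of_not_lt htr)
          have : j t = n := by subst htr'; simp [hjdef]
          rw [this]; exact x.isLt
    · rintro ⟨h1, h2⟩
      rw [heS] at h2
      constructor
      · intro k hk
        cases t with
        | zero => omega
        | succ s =>
            rw [heS] at h1
            exact le_trans (hjmono k s (Nat.lt_succ_iff.mp hk)) h1
      · intro htr hjt
        omega
  have hδiff : ∀ (x : Fin n) (t : ℕ), t ≤ r →
      (δf x = t ↔ (x ∈ W (t + 1) ∧ x ∉ W t)) := by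
    intro x t ht
    rw [hδdef]
    rw [aux_downset _ r t ht (fun k l hkl hlr hP hxk => hP (hUmono k l hkl hxk))]
    rw [hWS]
    constructor
    · rintro ⟨h1, h2⟩
      constructor
      · by_cases htr : t < r
        · exact not_not.mp (h2 htr)
        · have htr' : t = r := le_antisymm ht (Nat.le_of_not_lt htr)
          have : U t = Finset.univ := by subst htr'; simp [hUdef]
          rw [this]; exact Finset.mem_univ x
      · cases t with
        | zero => rw [hW0]; exact Finset.notMem_empty x
        | succ s => rw [hWS]; exact h1 s (Nat.lt_succ_self s)
    · rintro ⟨h1, h2⟩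
      constructor
      · intro k hk
        cases t with
        | zero => omega
        | succ s =>
            rw [hWS] at h2
            intro hxk
            exact h2 (hUmono k s (Nat.lt_succ_iff.mp hk) hxk)
      · intro htr
        exact not_not.mpr h1
  have hβcard : ∀ t, t ≤ r →
      (Finset.univ.filter (fun x => βf x = t)).card = e (t + 1) - e t := by
    intro t ht
    have hset : Finset.univ.filter (fun x => βf x = t)
        = (Finset.univ.filter (fun x : Fin n => (x : ℕ) < e (t + 1)))
          \ (Finset.univ.filter (fun x : Fin n => (x : ℕ) < e t)) := by
      ext x
      simp only [Finset.mem_filter, Finset.mem_sdiff, Finset.mem_univ, true_and]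
      rw [hβiff x t ht]
      omega
    have hsub : (Finset.univ.filter (fun x : Fin n => (x : ℕ) < e t))
        ⊆ (Finset.univ.filter (fun x : Fin n => (x : ℕ) < e (t + 1))) := by
      intro x hx
      simp only [Finset.mem_filter, Finset.mem_univ, true_and] at hx ⊢
      exact lt_of_lt_of_le hx (hemono t)
    rw [hset, Finset.card_sdiff_of_subset hsub, aux_card_Ilt _ (heLe (t + 1)), aux_card_Ilt _ (heLe t)]
  have hδcard : ∀ t, t ≤ r →
      (Finset.univ.filter (fun x => δf x = t)).card = e (t + 1) - e t := by
    intro t ht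
    have hset : Finset.univ.filter (fun x => δf x = t) = W (t + 1) \ W t := by
      ext x
      simp only [Finset.mem_filter, Finset.mem_sdiff, Finset.mem_univ, true_and]
      exact hδiff x t ht
    rw [hset, Finset.card_sdiff_of_subset (hWmono t), hWcard (t + 1), hWcard t]
  set β' : Fin n → Fin (r + 1) := fun x => ⟨βf x, Nat.lt_succ_of_le (hβle x)⟩ with hβ'def
  set δ' : Fin n → Fin (r + 1) := fun x => ⟨δf x, Nat.lt_succ_of_le (hδle x)⟩ with hδ'def
  have hβsub : ∀ c : Fin (r + 1),
      Fintype.card {a : Fin n // β' a = c} = e ((c : ℕ) + 1) - e (c : ℕ) := by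
    intro c
    rw [Fintype.card_subtype]
    have : Finset.univ.filter (fun a : Fin n => β' a = c)
        = Finset.univ.filter (fun a : Fin n => βf a = (c : ℕ)) := by
      apply Finset.filter_congr
      intro a _
      rw [hβ'def]
      exact ⟨fun h => congrArg Fin.val h, fun h => Fin.ext h⟩
    rw [this, hβcard _ (Nat.lt_succ_iff.mp c.isLt)]
  have hδsub : ∀ c : Fin (r + 1),
      Fintype.card {a : Fin n // δ' a = c} = e ((c : ℕ) + 1) - e (c : ℕ) := by
    intro c
    rw [Fintype.card_subtype]
    have : Finset.univ.filter (fun a : Fin n => δ' a = c)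
        = Finset.univ.filter (fun a : Fin n => δf a = (c : ℕ)) := by
      apply Finset.filter_congr
      intro a _
      rw [hδ'def]
      exact ⟨fun h => congrArg Fin.val h, fun h => Fin.ext h⟩
    rw [this, hδcard _ (Nat.lt_succ_iff.mp c.isLt)]
  have hfibeq : Finset.univ.filter (fun σ : Equiv.Perm (Fin n) => Φ σ = T)
      = Finset.univ.filter (fun σ : Equiv.Perm (Fin n) => δ' ∘ ⇑σ = β') := by
    apply Finset.filter_congr
    intro σ _
    constructor
    · intro hσ
      funext x
      apply Fin.ext
      show ((Finset.range r).filter (fun k => σ x ∉ U k)).card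
        = ((Finset.range r).filter (fun k => j k ≤ ((x : Fin n) : ℕ))).card
      congr 1
      apply Finset.filter_congr
      intro k hk
      rw [Finset.mem_range] at hk
      have hTk : U k = (Finset.univ.filter (fun y : Fin n => (y : ℕ) < i ⟨k, hk⟩)).image σ := by
        rw [hUdef]
        simp only [dif_pos hk]
        exact (congrFun hσ ⟨k, hk⟩).symm
      rw [hTk]
      rw [not_iff_comm]
      have := Function.Injective.mem_finset_image (f := ⇑σ)
        (s := Finset.univ.filter (fun y : Fin n => (y : ℕ) < i ⟨k, hk⟩)) (a := x) σ.injective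
      rw [this]
      simp only [Finset.mem_filter, Finset.mem_univ, true_and, hjdef, dif_pos hk]
      omega
    · intro hσ
      funext k
      show (Finset.univ.filter (fun y : Fin n => (y : ℕ) < i k)).image σ = T k
      have hcard1 : ((Finset.univ.filter (fun y : Fin n => (y : ℕ) < i k)).image σ).card
          = (T k).card := by
        rw [Finset.card_image_of_injective _ σ.injective, aux_card_Ilt _ (hle k), hcardT k]
      apply Finset.eq_of_subset_of_card_le _ (le_of_eq hcard1.symm)
      intro y hy
      rw [Finset.mem_image] at hy
      obtain ⟨x, hx, rfl⟩ := hy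
      rw [Finset.mem_filter] at hx
      by_contra hnot
      have hUk : U (k : ℕ) = T k := by
        rw [hUdef]
        simp only [dif_pos k.isLt, Fin.eta]
      have hjk : j (k : ℕ) = i k := by
        rw [hjdef]
        simp only [dif_pos k.isLt, Fin.eta]
      have h1 : βf x ≤ (k : ℕ) := by
        show ((Finset.range r).filter (fun l => j l ≤ (x : ℕ))).card ≤ (k : ℕ)
        refine le_trans (Finset.card_le_card ?_) (Finset.card_range (k : ℕ)).le
        intro l hl
        rw [Finset.mem_filter, Finset.mem_range] at hl
        rw [Finset.mem_range]
        by_contra hlk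
        push_neg at hlk
        have h2 := hjmono _ _ hlk
        rw [hjk] at h2
        omega
      have h2 : (k : ℕ) + 1 ≤ δf (σ x) := by
        show (k : ℕ) + 1 ≤ ((Finset.range r).filter (fun l => σ x ∉ U l)).card
        calc (k : ℕ) + 1 = (Finset.range ((k : ℕ) + 1)).card := (Finset.card_range _).symm
          _ ≤ _ := by
            apply Finset.card_le_card
            intro l hl
            rw [Finset.mem_range] at hl
            rw [Finset.mem_filter, Finset.mem_range]
            have hlk : l ≤ (k : ℕ) := Nat.lt_succ_iff.mp hl
            refine ⟨lt_of_le_of_lt hlk k.isLt, fun hmem => hnot ?_⟩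
            rw [← hUk]
            exact hUmono l (k : ℕ) hlk hmem
      have h3 : δf (σ x) = βf x := by
        have h4 := congrFun hσ x
        have h5 : δf (σ x) = (δ' (σ x) : ℕ) := rfl
        have h6 : βf x = (β' x : ℕ) := rfl
        rw [h5, h6]
        exact congrArg Fin.val h4
      omega
  have hcards : ∀ c : Fin (r + 1),
      Fintype.card {a : Fin n // β' a = c} = Fintype.card {a : Fin n // δ' a = c} := by
    intro c; rw [hβsub, hδsub]
  have hfibcard : (Finset.univ.filter (fun σ : Equiv.Perm (Fin n) => Φ σ = T)).card
      = ∏ t ∈ Finset.range (r + 1), (e (t + 1) - e t).factorial := by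
    rw [hfibeq, ← Fintype.card_subtype, aux_card_perm_fiber β' δ' hcards]
    rw [← Fin.prod_univ_eq_prod_range (fun t => (e (t + 1) - e t).factorial) (r + 1)]
    exact Finset.prod_congr rfl fun c _ => by rw [hδsub c]
  have hinner : (∑ σ ∈ Finset.univ.filter (fun σ => Φ σ = T), ∏ k : Fin r, nuSig ν σ (i k))
      = ((∏ t ∈ Finset.range (r + 1), (e (t + 1) - e t).factorial : ℕ) : ℝ)
        * ∏ k : Fin r, ν (T k) := by
    have hconst : ∀ σ ∈ Finset.univ.filter (fun σ => Φ σ = T),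
        (∏ k : Fin r, nuSig ν σ (i k)) = ∏ k : Fin r, ν (T k) := by
      intro σ hσ
      rw [Finset.mem_filter] at hσ
      refine Finset.prod_congr rfl fun k _ => ?_
      show ν ((Finset.univ.filter (fun y : Fin n => (y : ℕ) < i k)).image σ) = ν (T k)
      rw [← congrFun hσ.2 k]
    rw [Finset.sum_congr rfl hconst, Finset.sum_const, hfibcard, nsmul_eq_mul]
  have hKey : (∏ t ∈ Finset.range (r + 1), (e (t + 1) - e t).factorial)
      * (∏ k ∈ Finset.range r, Nat.choose (j (k + 1)) (j k)) = n.factorial := by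
    have h1 := aux_tele e hemono (r + 1)
    rw [heLast, he0, Nat.factorial_zero, one_mul, Finset.prod_mul_distrib] at h1
    have h2 : (∏ t ∈ Finset.range (r + 1), Nat.choose (e (t + 1)) (e t))
        = ∏ k ∈ Finset.range r, Nat.choose (j (k + 1)) (j k) := by
      rw [Finset.prod_range_succ']
      simp only [he0, heS, Nat.choose_zero_right, mul_one]
    rw [← h2, mul_comm]
    exact h1
  have hRHS : (∏ k : Fin r, ν (T k) /
        (Nat.choose (if h : (k : ℕ) + 1 < r then (T ⟨(k : ℕ) + 1, h⟩).card else n)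
          (T k).card : ℝ))
      = (∏ k : Fin r, ν (T k))
        / ((∏ k ∈ Finset.range r, Nat.choose (j (k + 1)) (j k) : ℕ) : ℝ) := by
    rw [Finset.prod_div_distrib]
    congr 1
    rw [Nat.cast_prod,
      ← Fin.prod_univ_eq_prod_range (fun k => (Nat.choose (j (k + 1)) (j k) : ℝ)) r]
    refine Finset.prod_congr rfl fun k _ => ?_
    have harg : (if h : (k : ℕ) + 1 < r then (T ⟨(k : ℕ) + 1, h⟩).card else n)
        = j ((k : ℕ) + 1) := by
      by_cases h : (k : ℕ) + 1 < r
      · simp only [dif_pos h, hjdef]; exact hcardT _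
      · simp only [dif_neg h, hjdef]
    have harg2 : (T k).card = j (k : ℕ) := by
      rw [hcardT k]
      simp only [hjdef, dif_pos k.isLt, Fin.eta]
    rw [harg, harg2]
  rw [hinner, hRHS]
  have hC0 : ((∏ k ∈ Finset.range r, Nat.choose (j (k + 1)) (j k) : ℕ) : ℝ) ≠ 0 := by
    have h0 : (∏ k ∈ Finset.range r, Nat.choose (j (k + 1)) (j k)) ≠ 0 := by
      intro h
      rw [h, mul_zero] at hKey
      exact n.factorial_ne_zero hKey.symm
    exact_mod_cast h0
  have hN0 : ((n.factorial : ℕ) : ℝ) ≠ 0 := by exact_mod_cast n.factorial_ne_zero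
  have hFC : ((∏ t ∈ Finset.range (r + 1), (e (t + 1) - e t).factorial : ℕ) : ℝ)
      * ((∏ k ∈ Finset.range r, Nat.choose (j (k + 1)) (j k) : ℕ) : ℝ)
      = ((n.factorial : ℕ) : ℝ) := by exact_mod_cast hKey
  have hF0 : ((∏ t ∈ Finset.range (r + 1), (e (t + 1) - e t).factorial : ℕ) : ℝ) ≠ 0 := by
    have h0 : 0 < ∏ t ∈ Finset.range (r + 1), (e (t + 1) - e t).factorial :=
      Finset.prod_pos fun _ _ => Nat.factorial_pos _
    exact_mod_cast h0.ne'
  rw [← hFC]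
  exact aux_scalar _ _ _ hF0 hC0


end ChoquetPaper
end
end

section
/- Suppose E[|X_1|] < ∞. Then for any game ν on N, with the convention X_{0:n} := 0, E[Y_ν] = Σ_{∅ ≠ T ⊆ N} ( ν(T)/C(n,|T|) ) · E[ X_{n−|T|+1:n} − X_{n−|T|:n} ], where C(a,b) denotes the binomial coefficient. -/
open MeasureTheory ProbabilityTheory Finset

noncomputable section

namespace ChoquetPaper

variable {n : ℕ} {Ω : Type*}

-- measurability of sort-related sets
lemma measurableSet_sort_eq_s5 (ρ : Equiv.Perm (Fin n)) :
    MeasurableSet {x : Fin n → ℝ | Tuple.sort x = ρ} := by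
  have hset : {x : Fin n → ℝ | Tuple.sort x = ρ}
      = (⋂ (i) (j) (_ : i ≤ j), {x : Fin n → ℝ | x (ρ i) ≤ x (ρ j)})
        ∩ ⋂ (i) (j) (_ : i < j), {x : Fin n → ℝ | x (ρ i) = x (ρ j) → ρ i < ρ j} := by
    ext x
    rw [Set.mem_setOf_eq, eq_comm, Tuple.eq_sort_iff]
    simp only [Set.mem_inter_iff, Set.mem_iInter, Set.mem_setOf_eq]
    constructor
    · rintro ⟨h1, h2⟩
      exact ⟨fun i j hij => h1 hij, fun i j hij => h2 i j hij⟩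
    · rintro ⟨h1, h2⟩
      exact ⟨fun i j hij => h1 i j hij, fun i j hij => h2 i j hij⟩
  rw [hset]
  apply MeasurableSet.inter
  · exact MeasurableSet.iInter fun i => MeasurableSet.iInter fun j =>
      MeasurableSet.iInter fun _ =>
        measurableSet_le (measurable_pi_apply _) (measurable_pi_apply _)
  · refine MeasurableSet.iInter fun i => MeasurableSet.iInter fun j =>
      MeasurableSet.iInter fun hij => ?_
    by_cases h : ρ i < ρ j
    · simp only [h, imp_true_iff]
      exact MeasurableSet.univ
    · have : {x : Fin n → ℝ | x (ρ i) = x (ρ j) → ρ i < ρ j}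
          = {x : Fin n → ℝ | x (ρ i) = x (ρ j)}ᶜ := by
        ext x; simp [h]
      rw [this]
      have : {x : Fin n → ℝ | x (ρ i) = x (ρ j)}
          = {x : Fin n → ℝ | x (ρ i) ≤ x (ρ j)} ∩ {x : Fin n → ℝ | x (ρ j) ≤ x (ρ i)} := by
        ext x; simp [le_antisymm_iff]
      rw [this]
      have m1 : Measurable fun x : Fin n → ℝ => x (ρ i) := measurable_pi_apply _
      have m2 : Measurable fun x : Fin n → ℝ => x (ρ j) := measurable_pi_apply _
      exact ((measurableSet_le m1 m2).inter (measurableSet_le m2 m1)).compl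

lemma measurableSet_strictAnti (ρ : Equiv.Perm (Fin n)) :
    MeasurableSet {x : Fin n → ℝ | StrictAnti (fun j => x (ρ j))} := by
  have hset : {x : Fin n → ℝ | StrictAnti (fun j => x (ρ j))}
      = ⋂ (i) (j) (_ : i < j), {x : Fin n → ℝ | x (ρ j) < x (ρ i)} := by
    ext x
    simp only [Set.mem_setOf_eq, Set.mem_iInter]
    constructor
    · intro h i j hij; exact h hij
    · intro h i j hij; exact h i j hij
  rw [hset]
  exact MeasurableSet.iInter fun i => MeasurableSet.iInter fun j =>
    MeasurableSet.iInter fun _ =>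
      measurableSet_lt (measurable_pi_apply _) (measurable_pi_apply _)

open Classical in
noncomputable def qfun (i : Fin n) : (Fin n → ℝ) → ℝ :=
  fun x => ∑ ρ : Equiv.Perm (Fin n), if Tuple.sort x = ρ then x (ρ i) else 0

lemma qfun_apply (i : Fin n) (x : Fin n → ℝ) : qfun i x = x (Tuple.sort x i) := by
  classical
  rw [qfun]
  rw [Finset.sum_ite_eq (univ : Finset (Equiv.Perm (Fin n))) (Tuple.sort x) (fun ρ => x (ρ i))]
  simp

lemma measurable_qfun (i : Fin n) : Measurable (qfun i) := by
  classical
  apply Finset.measurable_sum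
  intro ρ _
  exact Measurable.ite (measurableSet_sort_eq_s5 ρ) (measurable_pi_apply _) measurable_const

open Classical in
noncomputable def hfun (ν : Finset (Fin n) → ℝ) : (Fin n → ℝ) → ℝ :=
  fun x => ∑ ρ : Equiv.Perm (Fin n),
    if StrictAnti (fun j => x (ρ j)) then choquetPerm ν ρ x else 0

lemma measurable_hfun (ν : Finset (Fin n) → ℝ) : Measurable (hfun ν) := by
  classical
  apply Finset.measurable_sum
  intro ρ _
  exact Measurable.ite (measurableSet_strictAnti ρ) (measurable_choquetPerm ν ρ)
    measurable_const


lemma strictAnti_sortDesc {x : Fin n → ℝ} (hx : Function.Injective x) :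
    StrictAnti (fun j => x (sortDesc x j)) := by
  have hm : StrictMono (x ∘ Tuple.sort x) :=
    (Tuple.monotone_sort x).strictMono_of_injective (hx.comp (Equiv.injective _))
  intro a b hab
  have : Fin.rev b < Fin.rev a := Fin.rev_lt_rev.mpr hab
  exact hm this

lemma strictAnti_unique {x : Fin n → ℝ} (hx : Function.Injective x)
    {ρ₁ ρ₂ : Equiv.Perm (Fin n)} (h1 : StrictAnti (fun j => x (ρ₁ j)))
    (h2 : StrictAnti (fun j => x (ρ₂ j))) : ρ₁ = ρ₂ := by
  have hmono : ∀ (ρ : Equiv.Perm (Fin n)), StrictAnti (fun j => x (ρ j)) →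
      Monotone (x ∘ (Fin.revPerm.trans ρ)) := by
    intro ρ hρ a b hab
    simp only [Function.comp_apply, Equiv.trans_apply, Fin.revPerm_apply]
    rcases eq_or_lt_of_le hab with rfl | hlt
    · exact le_refl _
    · exact le_of_lt (hρ (Fin.rev_lt_rev.mpr hlt))
  have := Tuple.unique_monotone (hmono ρ₁ h1) (hmono ρ₂ h2)
  have hval : ∀ j, ρ₁ (Fin.rev j) = ρ₂ (Fin.rev j) := by
    intro j
    have h := congrFun this j
    simp only [Function.comp_apply, Equiv.trans_apply, Fin.revPerm_apply] at h
    exact hx h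
  ext i
  have h2 := hval (Fin.rev i)
  simp only [Fin.rev_rev] at h2
  exact congrArg Fin.val h2

lemma hfun_eq {ν : Finset (Fin n) → ℝ} {x : Fin n → ℝ} (hx : Function.Injective x) :
    hfun ν x = choquet ν x := by
  classical
  rw [hfun]
  rw [Finset.sum_eq_single (sortDesc x)]
  · rw [if_pos (strictAnti_sortDesc hx)]; rfl
  · intro ρ _ hρ
    rw [if_neg]
    intro hanti
    exact hρ (strictAnti_unique hx hanti (strictAnti_sortDesc hx))
  · intro h; exact absurd (Finset.mem_univ _) h

lemma sortDesc_comp {x : Fin n → ℝ} (hx : Function.Injective x) (τ : Equiv.Perm (Fin n)) :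
    sortDesc (x ∘ τ) = (sortDesc x).trans τ.symm := by
  have hxτ : Function.Injective (x ∘ τ) := hx.comp τ.injective
  refine strictAnti_unique hxτ (strictAnti_sortDesc hxτ) ?_
  have : (fun j => (x ∘ τ) (((sortDesc x).trans τ.symm) j)) = fun j => x (sortDesc x j) := by
    funext j; simp
  rw [this]
  exact strictAnti_sortDesc hx

lemma hfun_comp {ν : Finset (Fin n) → ℝ} {x : Fin n → ℝ} (hx : Function.Injective x)
    (τ : Equiv.Perm (Fin n)) :
    hfun ν (x ∘ τ) = ∑ i : Fin n,
      (nuSig ν ((sortDesc x).trans τ.symm) ((i : ℕ) + 1)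
        - nuSig ν ((sortDesc x).trans τ.symm) (i : ℕ)) * x (sortDesc x i) := by
  have hxτ : Function.Injective (x ∘ τ) := hx.comp τ.injective
  rw [hfun_eq hxτ, choquet, sortDesc_comp hx τ, choquetPerm]
  refine Finset.sum_congr rfl fun i _ => ?_
  simp


lemma measurableSet_injective :
    MeasurableSet {x : Fin n → ℝ | Function.Injective x} := by
  have hset : {x : Fin n → ℝ | Function.Injective x}
      = ⋂ (i) (j) (_ : i ≠ j), {x : Fin n → ℝ | x i = x j}ᶜ := by
    ext x
    simp only [Set.mem_setOf_eq, Set.mem_iInter, Set.mem_compl_iff]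
    constructor
    · intro h i j hij hxij
      exact hij (h hxij)
    · intro h a b hab
      by_contra hne
      exact h a b hne hab
  rw [hset]
  refine MeasurableSet.iInter fun i => MeasurableSet.iInter fun j =>
    MeasurableSet.iInter fun _ => ?_
  have : {x : Fin n → ℝ | x i = x j}
      = {x : Fin n → ℝ | x i ≤ x j} ∩ {x : Fin n → ℝ | x j ≤ x i} := by
    ext x; simp [le_antisymm_iff]
  rw [this]
  have m1 : Measurable fun x : Fin n → ℝ => x i := measurable_pi_apply _
  have m2 : Measurable fun x : Fin n → ℝ => x j := measurable_pi_apply _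
  exact ((measurableSet_le m1 m2).inter (measurableSet_le m2 m1)).compl

lemma abel_aux (n : ℕ) (a c : ℕ → ℝ) (ha : a 0 = 0) (hc : c 0 = 0) :
    ∑ j ∈ range n, (a (j+1) - a j) * c (n - j)
      = ∑ j ∈ range n, a (j+1) * (c (n-j) - c (n-j-1)) := by
  have key : ∑ j ∈ range n, a (j+1) * c (n-j-1) = ∑ j ∈ range n, a j * c (n - j) := by
    have h1 := Finset.sum_range_succ' (fun j => a j * c (n - j)) n
    have h2 := Finset.sum_range_succ (fun j => a j * c (n - j)) n
    have hnn : ∀ j, n - (j+1) = n - j - 1 := fun j => by omega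
    simp only [hnn] at h1
    rw [ha] at h1
    rw [Nat.sub_self, hc] at h2
    simp only [mul_zero, add_zero, zero_mul, add_zero] at h1 h2
    rw [← h1, h2]
  have expand : ∀ j ∈ range n, a (j+1) * (c (n-j) - c (n-j-1))
      = a (j+1) * c (n-j) - a (j+1) * c (n-j-1) := fun j _ => by ring
  rw [Finset.sum_congr rfl expand, Finset.sum_sub_distrib, key]
  rw [← Finset.sum_sub_distrib]
  exact Finset.sum_congr rfl fun j _ => by ring

lemma sum_hfun_comp {ν : Finset (Fin n) → ℝ} {x : Fin n → ℝ} (hx : Function.Injective x) :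
    ∑ τ : Equiv.Perm (Fin n), hfun ν (x ∘ τ)
      = ∑ i : Fin n, ((∑ ρ : Equiv.Perm (Fin n), nuSig ν ρ ((i : ℕ) + 1))
          - ∑ ρ : Equiv.Perm (Fin n), nuSig ν ρ (i : ℕ)) * x (sortDesc x i) := by
  have h1 : ∀ τ : Equiv.Perm (Fin n), hfun ν (x ∘ τ) = ∑ i : Fin n,
      (nuSig ν ((sortDesc x).trans τ.symm) ((i : ℕ) + 1)
        - nuSig ν ((sortDesc x).trans τ.symm) (i : ℕ)) * x (sortDesc x i) :=
    fun τ => hfun_comp hx τ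
  rw [Finset.sum_congr rfl (fun τ _ => h1 τ), Finset.sum_comm]
  refine Finset.sum_congr rfl fun i _ => ?_
  rw [← Finset.sum_mul, ← Finset.sum_sub_distrib]
  congr 1
  let E : Equiv.Perm (Fin n) ≃ Equiv.Perm (Fin n) :=
    ⟨fun τ => (sortDesc x).trans τ.symm, fun ρ => ((sortDesc x).symm.trans ρ).symm,
      fun τ => by
        ext a; simp, fun ρ => by
        ext a; simp⟩
  exact Fintype.sum_equiv E _ _ (fun τ => rfl)


lemma subtypeCongr_pos {α : Type*} {p q : α → Prop} [DecidablePred p] [DecidablePred q]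
    (e : { x // p x } ≃ { x // q x }) (f : { x // ¬p x } ≃ { x // ¬q x }) {a : α} (h : p a) :
    Equiv.subtypeCongr e f a = e ⟨a, h⟩ := by
  simp [Equiv.subtypeCongr, h]

lemma subtypeCongr_neg {α : Type*} {p q : α → Prop} [DecidablePred p] [DecidablePred q]
    (e : { x // p x } ≃ { x // q x }) (f : { x // ¬p x } ≃ { x // ¬q x }) {a : α} (h : ¬ p a) :
    Equiv.subtypeCongr e f a = f ⟨a, h⟩ := by
  simp [Equiv.subtypeCongr, h]

/-- Equivalence between permutations mapping `S` onto `T` and pairs of bijections. -/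
def permImageEquiv (S T : Finset (Fin n)) (hST : S.card = T.card) :
    {ρ : Equiv.Perm (Fin n) // S.image ρ = T} ≃
      (({a // a ∈ S} ≃ {a // a ∈ T}) × ({a // a ∉ S} ≃ {a // a ∉ T})) where
  toFun := fun ⟨ρ, hρ⟩ =>
    have hmem : ∀ a, a ∈ S ↔ ρ a ∈ T := fun a => by
      constructor
      · intro ha; rw [← hρ]; exact Finset.mem_image_of_mem ρ ha
      · intro ha
        rw [← hρ] at ha
        obtain ⟨b, hb, hba⟩ := Finset.mem_image.1 ha
        rwa [← ρ.injective hba]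
    ⟨⟨fun a => ⟨ρ a, (hmem a).1 a.2⟩, fun b => ⟨ρ.symm b, (hmem (ρ.symm b)).2 (by
        simpa using b.2)⟩,
        fun a => by simp, fun b => by simp⟩,
      ⟨fun a => ⟨ρ a, fun h => a.2 ((hmem a).2 h)⟩, fun b => ⟨ρ.symm b, fun h => b.2 (by
          have := (hmem (ρ.symm b)).1 h; simpa using this)⟩,
        fun a => by simp, fun b => by simp⟩⟩
  invFun e :=
    ⟨Equiv.subtypeCongr e.1 e.2, by
      apply Finset.eq_of_subset_of_card_le
      · intro b hb
        obtain ⟨a, ha, rfl⟩ := Finset.mem_image.1 hb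
        rw [subtypeCongr_pos e.1 e.2 ha]
        exact (e.1 ⟨a, ha⟩).2
      · rw [Finset.card_image_of_injective _ (Equiv.injective _), hST]⟩
  left_inv := by
    rintro ⟨ρ, hρ⟩
    ext a
    by_cases h : a ∈ S
    · simp [subtypeCongr_pos _ _ h]
    · simp [subtypeCongr_neg _ _ h]
  right_inv := by
    rintro ⟨e₁, e₂⟩
    refine Prod.ext ?_ ?_
    · ext a
      simp [subtypeCongr_pos _ _ a.2]
    · ext a
      simp [subtypeCongr_neg _ _ a.2]

lemma card_perm_image (S T : Finset (Fin n)) (hST : S.card = T.card) :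
    (univ.filter fun ρ : Equiv.Perm (Fin n) => S.image ρ = T).card
      = Nat.factorial S.card * Nat.factorial (n - S.card) := by
  classical
  rw [← Fintype.card_subtype]
  rw [Fintype.card_congr (permImageEquiv S T hST), Fintype.card_prod]
  have e1 : {a // a ∈ S} ≃ {a // a ∈ T} :=
    Fintype.equivOfCardEq (by simp [Fintype.card_coe, hST])
  have e2 : {a // a ∉ S} ≃ {a // a ∉ T} := by
    refine Fintype.equivOfCardEq ?_
    rw [Fintype.card_subtype_compl, Fintype.card_subtype_compl]
    simp [Fintype.card_coe, hST]
  rw [Fintype.card_equiv e1, Fintype.card_equiv e2]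
  rw [Fintype.card_subtype_compl]
  simp [Fintype.card_coe]


lemma card_filter_lt (k : ℕ) (hk : k ≤ n) :
    (univ.filter fun j : Fin n => (j : ℕ) < k).card = k := by
  apply Finset.card_eq_of_bijective (fun i hi => ⟨i, lt_of_lt_of_le hi hk⟩)
  · intro a ha
    simp only [mem_filter, mem_univ, true_and] at ha
    exact ⟨a, ha, rfl⟩
  · intro i hi
    simp [hi]
  · intro i j hi hj h
    simpa using congrArg Fin.val h

lemma sum_perm_image (k : ℕ) (hk : k ≤ n) (ν : Finset (Fin n) → ℝ) :
    ∑ ρ : Equiv.Perm (Fin n), ν ((univ.filter fun j : Fin n => (j : ℕ) < k).image ρ)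
      = (Nat.factorial k * Nat.factorial (n - k) : ℝ) * ∑ T ∈ powersetCard k (univ : Finset (Fin n)), ν T := by
  classical
  set S := univ.filter fun j : Fin n => (j : ℕ) < k with hS
  have hcard : S.card = k := card_filter_lt k hk
  have hmaps : ∀ ρ ∈ (univ : Finset (Equiv.Perm (Fin n))), S.image ρ ∈ powersetCard k (univ : Finset (Fin n)) := by
    intro ρ _
    rw [Finset.mem_powersetCard_univ, Finset.card_image_of_injective _ ρ.injective, hcard]
  rw [← Finset.sum_fiberwise_of_maps_to hmaps (fun ρ => ν (S.image ρ))]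
  rw [Finset.mul_sum]
  refine Finset.sum_congr rfl fun T hT => ?_
  rw [Finset.mem_powersetCard_univ] at hT
  have : ∀ ρ ∈ univ.filter (fun ρ : Equiv.Perm (Fin n) => S.image ρ = T), ν (S.image ρ) = ν T := by
    intro ρ hρ
    rw [(Finset.mem_filter.1 hρ).2]
  rw [Finset.sum_congr rfl this, Finset.sum_const]
  rw [card_perm_image S T (by rw [hcard, hT]), hcard, nsmul_eq_mul]
  push_cast
  ring



/-- `E[Y_ν] = Σ_{∅ ≠ T ⊆ N} (ν(T)/C(n,|T|)) E[X_{n−|T|+1:n} − X_{n−|T|:n}]`. -/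
theorem statement5 {Ω : Type*} [MeasurableSpace Ω] {n : ℕ} (hn : 0 < n)
    (P : Measure Ω) [IsProbabilityMeasure P]
    (ν : Finset (Fin n) → ℝ) (hν0 : ν ∅ = 0) (hν01 : ∀ T, ν T ∈ Set.Icc (0:ℝ) 1)
    (X : Fin n → Ω → ℝ) (hmeas : ∀ i, Measurable (X i))
    (hindep : iIndepFun X P)
    (μ : Measure ℝ) (hac : μ ≪ volume) (hdist : ∀ i, Measure.map (X i) P = μ)
    (hint : Integrable (X ⟨0, hn⟩) P) :
    ∫ ω, choquet ν (fun i => X i ω) ∂P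
      = ∑ T ∈ Finset.univ.filter (fun T : Finset (Fin n) => T ≠ ∅),
          (ν T / (Nat.choose n T.card : ℝ)) *
            ∫ ω, (orderStat X (n - T.card + 1) ω - orderStat X (n - T.card) ω) ∂P := by
  classical
  have hvec : Measurable (fun ω (i : Fin n) => X i ω) := measurable_pi_lambda _ hmeas
  set vec : Ω → Fin n → ℝ := fun ω i => X i ω with hvecdef
  have hμ : IsProbabilityMeasure μ := by
    rw [← hdist ⟨0, hn⟩]; exact Measure.isProbabilityMeasure_map (hmeas _).aemeasurable
  set π : Measure (Fin n → ℝ) := Measure.pi (fun _ : Fin n => μ) with hπdef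
  -- joint law is the product measure
  have hπ : Measure.map vec P = π := by
    rw [hπdef]
    refine (Measure.pi_eq fun s hs => ?_).symm
    rw [Measure.map_apply hvec (MeasurableSet.univ_pi hs)]
    have hpre : vec ⁻¹' Set.pi Set.univ s = ⋂ i, X i ⁻¹' s i := by
      ext ω; simp [vec, Set.mem_pi]
    rw [hpre]
    have h2 := hindep.measure_inter_preimage_eq_mul Finset.univ (fun i _ => hs i)
    have hbi : (⋂ i ∈ (Finset.univ : Finset (Fin n)), X i ⁻¹' s i) = ⋂ i, X i ⁻¹' s i := by
      simp
    rw [hbi] at h2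
    rw [h2]
    refine Finset.prod_congr rfl fun i _ => ?_
    rw [← hdist i, Measure.map_apply (hmeas i) (hs i)]
  -- integrability of coordinates
  have hid : Integrable (fun y : ℝ => y) μ := by
    rw [← hdist ⟨0, hn⟩]
    exact (integrable_map_measure measurable_id.aestronglyMeasurable
      (hmeas _).aemeasurable).2 hint
  have hXint : ∀ i, Integrable (X i) P := fun i =>
    (integrable_map_measure measurable_id.aestronglyMeasurable (hmeas i).aemeasurable).1
      (by rw [hdist i]; exact hid)
  have habs : ∀ (x : Fin n → ℝ) (j : Fin n), |x j| ≤ ∑ k, |x k| := fun x j =>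
    Finset.single_le_sum (fun k _ => abs_nonneg (x k)) (mem_univ j)
  have hcoord : ∀ j : Fin n, Integrable (fun x : Fin n → ℝ => x j) π := fun j => by
    rw [← hπ]
    exact (integrable_map_measure (measurable_pi_apply j).aestronglyMeasurable
      hvec.aemeasurable).2 (hXint j)
  have hsum_abs : Integrable (fun x : Fin n → ℝ => ∑ k, |x k|) π :=
    integrable_finset_sum _ fun k _ => (hcoord k).abs
  have hqint : ∀ j : Fin n, Integrable (qfun j) π := fun j =>
    Integrable.mono' hsum_abs (measurable_qfun j).aestronglyMeasurable
      (Filter.Eventually.of_forall fun x => by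
        rw [qfun_apply, Real.norm_eq_abs]; exact habs x _)
  -- bound on hfun
  have hp : ∀ (ρ : Equiv.Perm (Fin n)) (k : ℕ), |nuSig ν ρ (k+1) - nuSig ν ρ k| ≤ 1 := by
    intro ρ k
    have A : nuSig ν ρ (k+1) ∈ Set.Icc (0:ℝ) 1 := hν01 _
    have B : nuSig ν ρ k ∈ Set.Icc (0:ℝ) 1 := hν01 _
    rw [abs_le]
    exact ⟨by linarith [A.1, A.2, B.1, B.2], by linarith [A.1, A.2, B.1, B.2]⟩
  have hcb : ∀ (ρ : Equiv.Perm (Fin n)) (x : Fin n → ℝ),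
      |choquetPerm ν ρ x| ≤ ∑ k, |x k| := by
    intro ρ x
    calc |choquetPerm ν ρ x| ≤ ∑ i : Fin n, |(nuSig ν ρ ((i:ℕ)+1) - nuSig ν ρ (i:ℕ)) * x (ρ i)| :=
          Finset.abs_sum_le_sum_abs _ _
      _ ≤ ∑ i : Fin n, |x (ρ i)| := by
          refine Finset.sum_le_sum fun i _ => ?_
          rw [abs_mul]
          calc |nuSig ν ρ ((i:ℕ)+1) - nuSig ν ρ (i:ℕ)| * |x (ρ i)|
              ≤ 1 * |x (ρ i)| := by
                exact mul_le_mul_of_nonneg_right (hp ρ i) (abs_nonneg _)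
            _ = |x (ρ i)| := one_mul _
      _ = ∑ k, |x k| := Equiv.sum_comp ρ (fun k => |x k|)
  have hhb : ∀ x : Fin n → ℝ, |hfun ν x| ≤ (n.factorial : ℝ) * ∑ k, |x k| := by
    intro x
    calc |hfun ν x| ≤ ∑ ρ : Equiv.Perm (Fin n),
          |if StrictAnti (fun j => x (ρ j)) then choquetPerm ν ρ x else 0| :=
          Finset.abs_sum_le_sum_abs _ _
      _ ≤ ∑ _ρ : Equiv.Perm (Fin n), ∑ k, |x k| := by
          refine Finset.sum_le_sum fun ρ _ => ?_
          by_cases h : StrictAnti (fun j => x (ρ j))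
          · rw [if_pos h]; exact hcb ρ x
          · rw [if_neg h, abs_zero]
            exact Finset.sum_nonneg fun k _ => abs_nonneg _
      _ = (n.factorial : ℝ) * ∑ k, |x k| := by
          rw [Finset.sum_const, card_univ, Fintype.card_perm, Fintype.card_fin, nsmul_eq_mul]
  have hhint : Integrable (hfun ν) π :=
    Integrable.mono' (hsum_abs.const_mul _) (measurable_hfun ν).aestronglyMeasurable
      (Filter.Eventually.of_forall fun x => by rw [Real.norm_eq_abs]; exact hhb x)
  -- a.e. injectivity
  have hpairzero : ∀ i j : Fin n, i ≠ j → P {ω | X i ω = X j ω} = 0 := by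
    intro i j hij
    have hIndep := hindep.indepFun hij
    have hmap := (ProbabilityTheory.indepFun_iff_map_prod_eq_prod_map_map
      (hmeas i).aemeasurable (hmeas j).aemeasurable).1 hIndep
    have hdiag : MeasurableSet {p : ℝ × ℝ | p.1 = p.2} :=
      (isClosed_eq continuous_fst continuous_snd).measurableSet
    have hrw : {ω | X i ω = X j ω} = (fun ω => (X i ω, X j ω)) ⁻¹' {p : ℝ × ℝ | p.1 = p.2} := rfl
    rw [hrw, ← Measure.map_apply ((hmeas i).prodMk (hmeas j)) hdiag, hmap, hdist i, hdist j,
      Measure.prod_apply hdiag]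
    have hsingle : ∀ a : ℝ, (Prod.mk a ⁻¹' {p : ℝ × ℝ | p.1 = p.2}) = {a} := by
      intro a; ext b; simp [eq_comm]
    simp only [hsingle]
    have hz : ∀ a : ℝ, μ {a} = 0 := fun a => hac (by simp)
    simp [hz]
  have hinj : ∀ᵐ ω ∂P, Function.Injective (vec ω) := by
    have hall : ∀ᵐ ω ∂P, ∀ i j : Fin n, i ≠ j → X i ω ≠ X j ω := by
      rw [ae_all_iff]
      intro i
      rw [ae_all_iff]
      intro j
      by_cases hij : i = j
      · subst hij
        exact Filter.Eventually.of_forall fun ω h => absurd rfl h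
      · rw [ae_iff]
        refine measure_mono_null ?_ (hpairzero i j hij)
        intro ω hω
        simp only [Set.mem_setOf_eq] at hω ⊢
        push_neg at hω
        exact hω.2
    filter_upwards [hall] with ω h a b hab
    by_contra hne
    exact h a b hne hab
  have hinjπ : ∀ᵐ x ∂π, Function.Injective x := by
    rw [← hπ, ae_map_iff hvec.aemeasurable measurableSet_injective]
    exact hinj
  -- orderStat basics
  have hos0 : orderStat X 0 = fun _ : Ω => (0:ℝ) := by
    funext ω; rw [orderStat, dif_neg (by omega)]
  have hosq : ∀ (m : ℕ) (h1 : 1 ≤ m) (h2 : m ≤ n),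
      orderStat X m = fun ω => qfun (⟨m-1, by omega⟩ : Fin n) (vec ω) := by
    intro m h1 h2
    funext ω
    rw [orderStat, dif_pos ⟨by omega, h1⟩, qfun_apply]
  have hosint : ∀ m, Integrable (orderStat X m) P := by
    intro m
    by_cases h : 1 ≤ m ∧ m ≤ n
    · rw [hosq m h.1 h.2]
      exact (integrable_map_measure (measurable_qfun _).aestronglyMeasurable
        hvec.aemeasurable).1 (by rw [hπ]; exact hqint _)
    · have : orderStat X m = fun _ : Ω => (0:ℝ) := by
        funext ω; rw [orderStat, dif_neg (by omega)]
      rw [this]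
      exact integrable_const 0
  -- notation
  set B : ℕ → ℝ := fun k => ∑ ρ : Equiv.Perm (Fin n), nuSig ν ρ k with hBdef
  set c : ℕ → ℝ := fun m => ∫ ω, orderStat X m ω ∂P with hcdef
  set a : ℕ → ℝ := fun k =>
    (∑ T ∈ powersetCard k (univ : Finset (Fin n)), ν T) / (n.choose k : ℝ) with hadef
  have ha0 : a 0 = 0 := by simp [hadef, hν0]
  have hc0 : c 0 = 0 := by simp [hcdef, hos0]
  -- measure preserving coordinate permutations
  have hmcomp : ∀ τ : Equiv.Perm (Fin n), Measurable (fun x : Fin n → ℝ => x ∘ τ) :=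
    fun τ => measurable_pi_lambda _ fun i => measurable_pi_apply _
  have hmp0 : ∀ τ : Equiv.Perm (Fin n), Measure.map (fun x : Fin n → ℝ => x ∘ τ) π = π := by
    intro τ
    have h := measurePreserving_piCongrLeft (fun _ : Fin n => μ) τ.symm
    have hco : ⇑(MeasurableEquiv.piCongrLeft (fun _ : Fin n => ℝ) τ.symm)
        = fun x : Fin n → ℝ => x ∘ τ := by
      funext x
      funext j
      have h1 := MeasurableEquiv.piCongrLeft_apply_apply (β := fun _ : Fin n => ℝ)
        τ.symm x (τ j)
      rwa [Equiv.symm_apply_apply] at h1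
    rw [← hco]
    exact h.map_eq
  have hmp : ∀ τ : Equiv.Perm (Fin n), ∫ x, hfun ν (x ∘ τ) ∂π = ∫ x, hfun ν x ∂π := by
    intro τ
    have h := integral_map (μ := π) (hmcomp τ).aemeasurable
      ((measurable_hfun ν).aestronglyMeasurable :
        AEStronglyMeasurable (hfun ν) (Measure.map (fun x : Fin n → ℝ => x ∘ τ) π))
    rw [hmp0 τ] at h
    exact h.symm
  have hintcomp : ∀ τ : Equiv.Perm (Fin n),
      Integrable (fun x : Fin n → ℝ => hfun ν (x ∘ τ)) π := fun τ =>
    (MeasurePreserving.integrable_comp ⟨hmcomp τ, hmp0 τ⟩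
      (measurable_hfun ν).aestronglyMeasurable).2 hhint
  -- chain of equalities
  have step1 : ∫ ω, choquet ν (fun i => X i ω) ∂P = ∫ x, hfun ν x ∂π := by
    rw [← hπ, integral_map hvec.aemeasurable (measurable_hfun ν).aestronglyMeasurable]
    refine integral_congr_ae ?_
    filter_upwards [hinj] with ω h
    exact (hfun_eq h).symm
  have step2 : ∫ x, hfun ν x ∂π
      = (n.factorial : ℝ)⁻¹ * ∑ τ : Equiv.Perm (Fin n), ∫ x, hfun ν (x ∘ τ) ∂π := by
    rw [Finset.sum_congr rfl (fun τ _ => hmp τ), Finset.sum_const, card_univ,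
      Fintype.card_perm, Fintype.card_fin, nsmul_eq_mul, ← mul_assoc,
      inv_mul_cancel₀ (Nat.cast_ne_zero.mpr n.factorial_ne_zero), one_mul]
  have step3 : ∑ τ : Equiv.Perm (Fin n), ∫ x, hfun ν (x ∘ τ) ∂π
      = ∫ x, ∑ τ : Equiv.Perm (Fin n), hfun ν (x ∘ τ) ∂π :=
    (integral_finset_sum _ fun τ _ => hintcomp τ).symm
  have step4 : ∫ x, ∑ τ : Equiv.Perm (Fin n), hfun ν (x ∘ τ) ∂π
      = ∫ x, ∑ i : Fin n, (B ((i:ℕ)+1) - B (i:ℕ)) * qfun (Fin.rev i) x ∂π := by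
    refine integral_congr_ae ?_
    filter_upwards [hinjπ] with x hx
    rw [sum_hfun_comp hx]
    refine Finset.sum_congr rfl fun i _ => ?_
    rw [qfun_apply]
    rfl
  have step5 : ∫ x, ∑ i : Fin n, (B ((i:ℕ)+1) - B (i:ℕ)) * qfun (Fin.rev i) x ∂π
      = ∑ i : Fin n, (B ((i:ℕ)+1) - B (i:ℕ)) * c (n - (i:ℕ)) := by
    rw [integral_finset_sum _ (fun i _ => (hqint _).const_mul _)]
    refine Finset.sum_congr rfl fun i _ => ?_
    rw [integral_const_mul]
    congr 1
    have hi : (i : ℕ) < n := i.isLt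
    have hcc : c (n - (i:ℕ)) = ∫ ω, orderStat X (n - (i:ℕ)) ω ∂P := rfl
    rw [hcc, ← hπ, integral_map hvec.aemeasurable (measurable_qfun _).aestronglyMeasurable]
    refine integral_congr_ae (Filter.Eventually.of_forall fun ω => ?_)
    rw [hosq (n - (i:ℕ)) (by omega) (by omega)]
    have : (Fin.rev i) = (⟨n - (i:ℕ) - 1, by omega⟩ : Fin n) := by
      apply Fin.ext
      simp [Fin.val_rev]
      omega
    rw [this]
  have hak : ∀ k, k ≤ n → (n.factorial : ℝ)⁻¹ * B k = a k := by
    intro k hk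
    have hBk : B k = ((k.factorial : ℝ) * ((n-k).factorial : ℝ))
        * ∑ T ∈ powersetCard k (univ : Finset (Fin n)), ν T := by
      rw [hBdef]
      have := sum_perm_image k hk ν
      push_cast at this ⊢
      exact this
    have h1 : (n.factorial : ℝ) ≠ 0 := Nat.cast_ne_zero.mpr (Nat.factorial_ne_zero n)
    have h2 : (n.choose k : ℝ) ≠ 0 := Nat.cast_ne_zero.mpr (Nat.choose_pos hk).ne'
    have hch : (n.choose k : ℝ) * (k.factorial : ℝ) * ((n-k).factorial : ℝ)
        = (n.factorial : ℝ) := by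
      exact_mod_cast congrArg (Nat.cast (R := ℝ)) (Nat.choose_mul_factorial_mul_factorial hk)
    rw [hBk, hadef]
    field_simp
    linear_combination (∑ T ∈ powersetCard k (univ : Finset (Fin n)), ν T) * hch
  have lhsfinal : ∫ ω, choquet ν (fun i => X i ω) ∂P
      = ∑ j ∈ range n, a (j+1) * (c (n-j) - c (n-j-1)) := by
    rw [step1, step2, step3, step4, step5, Finset.mul_sum]
    have : ∀ i : Fin n, (n.factorial : ℝ)⁻¹ * ((B ((i:ℕ)+1) - B (i:ℕ)) * c (n - (i:ℕ)))
        = (a ((i:ℕ)+1) - a (i:ℕ)) * c (n - (i:ℕ)) := by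
      intro i
      have hi : (i:ℕ) < n := i.isLt
      rw [← hak ((i:ℕ)+1) (by omega), ← hak (i:ℕ) (by omega)]
      ring
    rw [Finset.sum_congr rfl (fun i _ => this i)]
    rw [Fin.sum_univ_eq_sum_range (fun j => (a (j+1) - a j) * c (n - j)) n]
    exact abel_aux n a c ha0 hc0
  have hsplit : ∀ T : Finset (Fin n),
      (∫ ω, (orderStat X (n - T.card + 1) ω - orderStat X (n - T.card) ω) ∂P)
        = c (n - T.card + 1) - c (n - T.card) := fun T =>
    integral_sub (hosint _) (hosint _)
  have hmapsto : ∀ T ∈ Finset.univ.filter (fun T : Finset (Fin n) => T ≠ ∅),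
      T.card ∈ Finset.Icc 1 n := by
    intro T hT
    rw [Finset.mem_filter] at hT
    rw [Finset.mem_Icc]
    constructor
    · exact Finset.card_pos.mpr (Finset.nonempty_iff_ne_empty.mpr hT.2)
    · calc T.card ≤ (univ : Finset (Fin n)).card := Finset.card_le_univ T
        _ = n := by simp
  have hinner : ∀ k ∈ Finset.Icc 1 n,
      (∑ T ∈ (Finset.univ.filter (fun T : Finset (Fin n) => T ≠ ∅)).filter
          (fun T => T.card = k),
        ν T / (n.choose T.card : ℝ) * (c (n - T.card + 1) - c (n - T.card)))
      = a k * (c (n - k + 1) - c (n - k)) := by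
    intro k hk
    rw [Finset.mem_Icc] at hk
    have hfib : (Finset.univ.filter (fun T : Finset (Fin n) => T ≠ ∅)).filter
        (fun T => T.card = k) = powersetCard k (univ : Finset (Fin n)) := by
      ext T
      simp only [Finset.mem_filter, Finset.mem_univ, true_and,
        Finset.mem_powersetCard_univ]
      constructor
      · rintro ⟨_, h⟩; exact h
      · intro h
        refine ⟨?_, h⟩
        intro he
        rw [he] at h
        simp at h
        omega
    rw [hfib]
    have hcg : ∀ T ∈ powersetCard k (univ : Finset (Fin n)),
        ν T / (n.choose T.card : ℝ) * (c (n - T.card + 1) - c (n - T.card))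
          = ν T * ((c (n - k + 1) - c (n - k)) / (n.choose k : ℝ)) := by
      intro T hT
      rw [Finset.mem_powersetCard_univ] at hT
      rw [hT]
      ring
    rw [Finset.sum_congr rfl hcg, ← Finset.sum_mul, hadef]
    ring
  have rhsfinal : (∑ T ∈ Finset.univ.filter (fun T : Finset (Fin n) => T ≠ ∅),
        (ν T / (Nat.choose n T.card : ℝ)) *
          ∫ ω, (orderStat X (n - T.card + 1) ω - orderStat X (n - T.card) ω) ∂P)
      = ∑ j ∈ range n, a (j+1) * (c (n-j) - c (n-j-1)) := by
    calc (∑ T ∈ Finset.univ.filter (fun T : Finset (Fin n) => T ≠ ∅),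
          (ν T / (Nat.choose n T.card : ℝ)) *
            ∫ ω, (orderStat X (n - T.card + 1) ω - orderStat X (n - T.card) ω) ∂P)
        = ∑ T ∈ Finset.univ.filter (fun T : Finset (Fin n) => T ≠ ∅),
            ν T / (n.choose T.card : ℝ) * (c (n - T.card + 1) - c (n - T.card)) :=
          Finset.sum_congr rfl fun T _ => by rw [hsplit T]
      _ = ∑ k ∈ Finset.Icc 1 n,
            ∑ T ∈ (Finset.univ.filter (fun T : Finset (Fin n) => T ≠ ∅)).filter
              (fun T => T.card = k),
            ν T / (n.choose T.card : ℝ) * (c (n - T.card + 1) - c (n - T.card)) :=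
          (Finset.sum_fiberwise_of_maps_to hmapsto _).symm
      _ = ∑ k ∈ Finset.Icc 1 n, a k * (c (n - k + 1) - c (n - k)) :=
          Finset.sum_congr rfl hinner
      _ = ∑ j ∈ range n, a (j+1) * (c (n-j) - c (n-j-1)) := by
          rw [← Finset.Ico_add_one_right_eq_Icc, Finset.sum_Ico_eq_sum_range]
          have hn1 : n + 1 - 1 = n := by omega
          rw [hn1]
          refine Finset.sum_congr rfl fun j hj => ?_
          rw [Finset.mem_range] at hj
          have e1 : n - (1 + j) + 1 = n - j := by omega
          have e2 : n - (1 + j) = n - j - 1 := by omega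
          rw [e1, e2, add_comm 1 j]
  rw [lhsfinal, rhsfinal]

end ChoquetPaper
end
end

section
/- For any game ν on N, E[Y_ν] = (1/(n+1)) · Σ_{T ⊆ N} ν(T)/C(n,|T|), where C(a,b) denotes the binomial coefficient. -/
open MeasureTheory ProbabilityTheory Finset

noncomputable section

namespace ChoquetPaper

variable {n : ℕ} {Ω : Type*}

/-! ### Auxiliary lemmas -/

lemma aux_lowerSet_eq_filter (s : Finset (Fin n)) (hs : ∀ i j : Fin n, j ≤ i → i ∈ s → j ∈ s) :
    s = univ.filter (fun j : Fin n => (j : ℕ) < s.card) := by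
  ext i
  simp only [mem_filter, mem_univ, true_and]
  constructor
  · intro hi
    have h : Finset.Iic i ⊆ s := fun j hj => hs i j (Finset.mem_Iic.mp hj) hi
    have := Finset.card_le_card h
    rw [Fin.card_Iic] at this
    omega
  · intro hi
    by_contra hcon
    have h : s ⊆ Finset.Iio i := by
      intro j hj
      rw [Finset.mem_Iio]
      by_contra hj2
      exact hcon (hs j i (le_of_not_gt hj2) hj)
    have := Finset.card_le_card h
    rw [Fin.card_Iio] at this
    omega

lemma aux_strictAnti_sortDesc {x : Fin n → ℝ} (hx : Function.Injective x) :
    StrictAnti (fun i => x (sortDesc x i)) := by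
  have hmono : StrictMono (fun i => x (Tuple.sort x i)) :=
    (Tuple.monotone_sort x).strictMono_of_injective (hx.comp (Equiv.injective _))
  intro a b hab
  exact hmono (show (Fin.revPerm b : Fin n) < Fin.revPerm a from Fin.rev_lt_rev.mpr hab)

lemma aux_key_pointwise (ν : Finset (Fin n) → ℝ) (hν0 : ν ∅ = 0) (x : Fin n → ℝ)
    (hx : Function.Injective x) (t : ℝ) :
    ν (univ.filter fun i => t < x i) =
      ∑ i : Fin n, (nuSig ν (sortDesc x) ((i : ℕ) + 1) - nuSig ν (sortDesc x) (i : ℕ)) *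
        (if t < x (sortDesc x i) then (1:ℝ) else 0) := by
  set σ := sortDesc x with hσ
  have hanti : StrictAnti (fun i => x (σ i)) := aux_strictAnti_sortDesc hx
  set s : Finset (Fin n) := univ.filter (fun i => t < x (σ i)) with hs_def
  have hlow : ∀ i j : Fin n, j ≤ i → i ∈ s → j ∈ s := by
    intro i j hji hi
    simp only [hs_def, mem_filter, mem_univ, true_and] at hi ⊢
    exact lt_of_lt_of_le hi (hanti.antitone hji)
  have hs : s = univ.filter (fun j : Fin n => (j : ℕ) < s.card) := aux_lowerSet_eq_filter s hlow
  set c := s.card with hc_def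
  have hc : c ≤ n := by
    simpa using Finset.card_le_card (Finset.subset_univ s)
  set F : ℕ → ℝ := nuSig ν σ with hF
  have hL : (univ.filter fun i => t < x i) = s.image σ := by
    ext i
    simp only [hs_def, Finset.mem_image, mem_filter, mem_univ, true_and]
    constructor
    · intro hi; exact ⟨σ.symm i, by simpa using hi, by simp⟩
    · rintro ⟨j, hj, rfl⟩; exact hj
  have hLHS : ν (univ.filter fun i => t < x i) = F c := by
    rw [hL, hs, hF]; rfl
  have hRHS : ∑ i : Fin n, (F ((i : ℕ) + 1) - F (i : ℕ)) *
      (if t < x (σ i) then (1:ℝ) else 0) = F c - F 0 := by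
    have h1 : ∀ i : Fin n, (F ((i : ℕ) + 1) - F (i : ℕ)) * (if t < x (σ i) then (1:ℝ) else 0)
        = if (i : ℕ) < c then F ((i : ℕ) + 1) - F (i : ℕ) else 0 := by
      intro i
      have : (t < x (σ i)) ↔ ((i : ℕ) < c) := by
        constructor
        · intro h
          have : i ∈ s := by simp [hs_def, h]
          rw [hs] at this; simpa using this
        · intro h
          have : i ∈ s := by rw [hs]; simpa using h
          simpa [hs_def] using this
      split_ifs with h1 h2 h2
      · ring
      · exact absurd (this.mp h1) h2
      · exact absurd (this.mpr h2) h1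
      · ring
    rw [Finset.sum_congr rfl (fun i _ => h1 i)]
    rw [Fin.sum_univ_eq_sum_range (fun j => if j < c then F (j + 1) - F j else 0) n]
    rw [Finset.sum_ite, Finset.sum_const_zero, add_zero]
    have : (Finset.range n).filter (fun j => j < c) = Finset.range c := by
      ext j; simp only [Finset.mem_filter, Finset.mem_range]; omega
    rw [this, Finset.sum_range_sub F c]
  have hF0 : F 0 = 0 := by
    have : (univ.filter (fun j : Fin n => (j : ℕ) < 0)) = ∅ := by
      ext j; simp
    simp [hF, nuSig, this, hν0]
  rw [hLHS, hRHS, hF0, sub_zero]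

lemma aux_integral_ite_lt {c : ℝ} (hc : c ∈ Set.Icc (0:ℝ) 1) :
    ∫ t in Set.Icc (0:ℝ) 1, (if t < c then (1:ℝ) else 0) = c := by
  have h1 : (fun t : ℝ => if t < c then (1:ℝ) else 0) = (Set.Iio c).indicator (fun _ => (1:ℝ)) := by
    ext t; simp [Set.indicator_apply, Set.mem_Iio]
  rw [h1, setIntegral_indicator measurableSet_Iio]
  rw [setIntegral_const]
  have h2 : Set.Icc (0:ℝ) 1 ∩ Set.Iio c = Set.Ico 0 c := by
    ext t
    simp only [Set.mem_inter_iff, Set.mem_Icc, Set.mem_Iio, Set.mem_Ico]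
    constructor
    · rintro ⟨⟨h0, h1'⟩, h2⟩; exact ⟨h0, h2⟩
    · rintro ⟨h0, h2⟩; exact ⟨⟨h0, le_trans h2.le hc.2⟩, h2⟩
  rw [h2, measureReal_def, Real.volume_Ico, smul_eq_mul, mul_one, ENNReal.toReal_ofReal (by linarith [hc.1]),
    sub_zero]

lemma aux_integrable_ite_lt (c : ℝ) :
    Integrable (fun t : ℝ => if t < c then (1:ℝ) else 0) (volume.restrict (Set.Icc 0 1)) := by
  have h1 : (fun t : ℝ => if t < c then (1:ℝ) else 0) = (Set.Iio c).indicator (fun _ => (1:ℝ)) := by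
    ext t; simp [Set.indicator_apply, Set.mem_Iio]
  rw [h1]
  exact (integrable_const 1).indicator measurableSet_Iio

lemma aux_choquet_eq_integral (ν : Finset (Fin n) → ℝ) (hν0 : ν ∅ = 0)
    (x : Fin n → ℝ) (hx : Function.Injective x) (hx01 : ∀ i, x i ∈ Set.Icc (0:ℝ) 1) :
    choquet ν x = ∫ t in Set.Icc (0:ℝ) 1, ν (univ.filter fun i => t < x i) := by
  have h1 : ∀ t : ℝ, ν (univ.filter fun i => t < x i) =
      ∑ i : Fin n, (nuSig ν (sortDesc x) ((i : ℕ) + 1) - nuSig ν (sortDesc x) (i : ℕ)) *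
        (if t < x (sortDesc x i) then (1:ℝ) else 0) := aux_key_pointwise ν hν0 x hx
  rw [integral_congr_ae (Filter.Eventually.of_forall h1)]
  rw [integral_finset_sum]
  · unfold choquet choquetPerm
    refine Finset.sum_congr rfl (fun i _ => ?_)
    rw [integral_const_mul, aux_integral_ite_lt (hx01 _)]
  · intro i _
    exact (aux_integrable_ite_lt _).const_mul _

lemma aux_nat_prod_fact (a b : ℕ) :
    a.factorial * ∏ j ∈ Finset.range (b + 1), (a + 1 + j) = (a + b + 1).factorial := by
  induction b with
  | zero => simp [Nat.factorial_succ, Nat.mul_comm]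
  | succ b ih =>
      rw [Finset.prod_range_succ, ← mul_assoc, ih]
      have h1 : a + (b + 1) + 1 = (a + b + 1) + 1 := by omega
      rw [h1, Nat.factorial_succ, mul_comm]
      congr 1
      omega

lemma aux_beta_nat (a b : ℕ) :
    ∫ t in (0:ℝ)..1, t ^ a * (1 - t) ^ b
      = (a.factorial * b.factorial : ℝ) / ((a + b + 1).factorial : ℝ) := by
  have hre : 0 < Complex.re ((a : ℂ) + 1) := by
    simp only [Complex.add_re, Complex.natCast_re, Complex.one_re]
    positivity
  have h := Complex.betaIntegral_eval_nat_add_one_right hre b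
  rw [Complex.betaIntegral] at h
  have hint : ∀ x : ℝ, (x:ℂ) ^ ((a:ℂ) + 1 - 1) * ((1:ℂ) - (x:ℂ)) ^ (((b:ℕ):ℂ) + 1 - 1)
      = ((x ^ a * (1 - x) ^ b : ℝ) : ℂ) := by
    intro x
    rw [add_sub_cancel_right, add_sub_cancel_right, Complex.cpow_natCast, Complex.cpow_natCast]
    push_cast
    ring
  rw [intervalIntegral.integral_congr (fun x _ => hint x)] at h
  rw [intervalIntegral.integral_ofReal] at h
  have hprod : (∏ j ∈ Finset.range (b + 1), ((a:ℂ) + 1 + j))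
      = ((∏ j ∈ Finset.range (b + 1), (a + 1 + j) : ℕ) : ℂ) := by push_cast; ring_nf
  rw [hprod] at h
  have hcast : ((b.factorial : ℂ) / ((∏ j ∈ Finset.range (b + 1), (a + 1 + j) : ℕ) : ℂ))
      = (((a.factorial * b.factorial : ℝ) / ((a + b + 1).factorial : ℝ) : ℝ) : ℂ) := by
    have hP : (a.factorial * ∏ j ∈ Finset.range (b + 1), (a + 1 + j)) = (a + b + 1).factorial :=
      aux_nat_prod_fact a b
    have hPne : ((∏ j ∈ Finset.range (b + 1), (a + 1 + j) : ℕ) : ℂ) ≠ 0 := by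
      have : 0 < ∏ j ∈ Finset.range (b + 1), (a + 1 + j) :=
        Finset.prod_pos (fun j _ => by omega)
      exact_mod_cast this.ne'
    have hQne : (((a + b + 1).factorial : ℕ) : ℂ) ≠ 0 := by
      exact_mod_cast (a + b + 1).factorial_pos.ne'
    have h2 : (((a.factorial * b.factorial : ℝ) / ((a + b + 1).factorial : ℝ) : ℝ) : ℂ)
        = ((a.factorial : ℂ) * (b.factorial : ℂ)) / (((a + b + 1).factorial : ℕ) : ℂ) := by
      push_cast; ring
    rw [h2, div_eq_div_iff hPne hQne]
    have hPc : ((a.factorial : ℕ) : ℂ) * ((∏ j ∈ Finset.range (b + 1), (a + 1 + j) : ℕ) : ℂ)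
        = (((a + b + 1).factorial : ℕ) : ℂ) := by exact_mod_cast hP
    linear_combination (-((b.factorial : ℕ) : ℂ)) * hPc
  rw [hcast] at h
  exact_mod_cast h

lemma aux_beta_nat_Icc (a b : ℕ) :
    ∫ t in Set.Icc (0:ℝ) 1, t ^ a * (1 - t) ^ b
      = (a.factorial * b.factorial : ℝ) / ((a + b + 1).factorial : ℝ) := by
  rw [integral_Icc_eq_integral_Ioc, ← intervalIntegral.integral_of_le (by norm_num : (0:ℝ) ≤ 1)]
  exact aux_beta_nat a b

lemma aux_ae_inj [MeasurableSpace Ω] (P : Measure Ω) [IsProbabilityMeasure P]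
    (X : Fin n → Ω → ℝ) (hmeas : ∀ i, Measurable (X i))
    (hindep : iIndepFun X P)
    (hdist : ∀ i, Measure.map (X i) P = volume.restrict (Set.Icc (0:ℝ) 1)) :
    ∀ᵐ ω ∂P, Function.Injective (fun i => X i ω) := by
  have key : ∀ i j : Fin n, i ≠ j → ∀ᵐ ω ∂P, X i ω ≠ X j ω := by
    intro i j hij
    have hpair : IndepFun (X i) (X j) P := hindep.indepFun hij
    have hmap : P.map (fun ω => (X i ω, X j ω)) = (P.map (X i)).prod (P.map (X j)) :=
      (indepFun_iff_map_prod_eq_prod_map_map (hmeas i).aemeasurable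
        (hmeas j).aemeasurable).mp hpair
    have hdiag : MeasurableSet {p : ℝ × ℝ | p.1 = p.2} :=
      measurableSet_eq_fun measurable_fst measurable_snd
    have h0 : P {ω | X i ω = X j ω} = 0 := by
      have : {ω | X i ω = X j ω} = (fun ω => (X i ω, X j ω)) ⁻¹' {p : ℝ × ℝ | p.1 = p.2} := rfl
      rw [this, ← Measure.map_apply ((hmeas i).prodMk (hmeas j)) hdiag, hmap,
        hdist i, hdist j]
      rw [Measure.prod_apply hdiag]
      have hz : ∀ x : ℝ, (volume.restrict (Set.Icc (0:ℝ) 1))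
          (Prod.mk x ⁻¹' {p : ℝ × ℝ | p.1 = p.2}) = 0 := by
        intro x
        have : Prod.mk x ⁻¹' {p : ℝ × ℝ | p.1 = p.2} = {x} := by
          ext y; simp [eq_comm]
        rw [this]
        exact le_antisymm (le_trans (Measure.restrict_apply_le _ _) (by simp)) bot_le
      simp [hz]
    rw [ae_iff]
    convert h0 using 2
    ext ω
    simp
  have h2 : ∀ᵐ ω ∂P, ∀ i j : Fin n, i ≠ j → X i ω ≠ X j ω := by
    rw [ae_all_iff]
    intro i
    rw [ae_all_iff]
    intro j
    by_cases hij : i = j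
    · filter_upwards with ω h; exact absurd hij h
    · filter_upwards [key i j hij] with ω h _; exact h
  filter_upwards [h2] with ω h
  intro i j hxy
  by_contra hij
  exact h i j hij hxy

lemma aux_ae_mem_Icc [MeasurableSpace Ω] (P : Measure Ω) [IsProbabilityMeasure P]
    (X : Fin n → Ω → ℝ) (hmeas : ∀ i, Measurable (X i))
    (hdist : ∀ i, Measure.map (X i) P = volume.restrict (Set.Icc (0:ℝ) 1)) :
    ∀ᵐ ω ∂P, ∀ i, X i ω ∈ Set.Icc (0:ℝ) 1 := by
  rw [ae_all_iff]
  intro i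
  have h : P (X i ⁻¹' (Set.Icc (0:ℝ) 1)ᶜ) = 0 := by
    rw [← Measure.map_apply (hmeas i) measurableSet_Icc.compl, hdist i,
      Measure.restrict_apply measurableSet_Icc.compl]
    simp
  exact measure_mono_null (fun ω hω => hω) h

lemma aux_decomp (ν : Finset (Fin n) → ℝ) (y : Fin n → ℝ) (t : ℝ) :
    ν (univ.filter fun i => t < y i) =
      ∑ T : Finset (Fin n), ν T *
        ∏ i : Fin n, (if i ∈ T then (if t < y i then (1:ℝ) else 0)
          else (if t < y i then 0 else 1)) := by
  rw [Finset.sum_eq_single (univ.filter fun i => t < y i)]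
  · have h1 : ∀ i : Fin n,
        (if i ∈ (univ.filter fun i => t < y i) then (if t < y i then (1:ℝ) else 0)
          else (if t < y i then 0 else 1)) = 1 := by
      intro i
      by_cases h : t < y i <;> simp [h]
    rw [Finset.prod_congr rfl (fun i _ => h1 i), Finset.prod_const_one, mul_one]
  · intro T _ hT
    have : ∃ i : Fin n, ¬ (i ∈ T ↔ t < y i) := by
      by_contra hcon
      push_neg at hcon
      exact hT (Finset.ext fun i => by
        simp only [mem_filter, mem_univ, true_and]; exact (hcon i))
    obtain ⟨i, hi⟩ := this
    rw [not_iff] at hi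
    have : (if i ∈ T then (if t < y i then (1:ℝ) else 0)
        else (if t < y i then 0 else 1)) = 0 := by
      by_cases h : i ∈ T
      · have h2 : ¬ t < y i := fun hlt => (hi.mpr hlt) h
        simp [h, h2]
      · simp [h, hi.mp h]
    rw [Finset.prod_eq_zero (Finset.mem_univ i) this, mul_zero]
  · intro h
    exact absurd (Finset.mem_univ _) h

lemma aux_exp_t [MeasurableSpace Ω] (P : Measure Ω) [IsProbabilityMeasure P]
    (ν : Finset (Fin n) → ℝ)
    (X : Fin n → Ω → ℝ) (hmeas : ∀ i, Measurable (X i))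
    (hindep : iIndepFun X P)
    (hdist : ∀ i, Measure.map (X i) P = volume.restrict (Set.Icc (0:ℝ) 1))
    {t : ℝ} (ht : t ∈ Set.Icc (0:ℝ) 1) :
    ∫ ω, ν (univ.filter fun i => t < X i ω) ∂P
      = ∑ T : Finset (Fin n), ν T * ((1 - t) ^ T.card * t ^ (n - T.card)) := by
  have hrw : ∀ ω, ν (univ.filter fun i => t < X i ω) =
      ∑ T : Finset (Fin n), ν T *
        ∏ i : Fin n, (if i ∈ T then (if t < X i ω then (1:ℝ) else 0)
          else (if t < X i ω then 0 else 1)) := fun ω => aux_decomp ν (fun i => X i ω) t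
  rw [integral_congr_ae (Filter.Eventually.of_forall hrw)]
  set S : Finset (Fin n) → Fin n → Set ℝ :=
    fun T i => if i ∈ T then Set.Ioi t else Set.Iic t with hS
  have hSmeas : ∀ T i, MeasurableSet (S T i) := by
    intro T i
    by_cases h : i ∈ T <;> simp [hS, h, measurableSet_Ioi, measurableSet_Iic]
  have hprod_ind : ∀ (T : Finset (Fin n)) (ω : Ω),
      (∏ i : Fin n, (if i ∈ T then (if t < X i ω then (1:ℝ) else 0)
        else (if t < X i ω then 0 else 1)))
      = Set.indicator (⋂ i ∈ (univ : Finset (Fin n)), X i ⁻¹' (S T i)) (fun _ => (1:ℝ)) ω := by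
    intro T ω
    by_cases hmem : ω ∈ ⋂ i ∈ (univ : Finset (Fin n)), X i ⁻¹' (S T i)
    · rw [Set.indicator_of_mem hmem]
      refine Finset.prod_eq_one (fun i _ => ?_)
      simp only [Set.mem_iInter] at hmem
      have := hmem i (Finset.mem_univ i)
      by_cases h : i ∈ T
      · simp only [hS, h, if_true, Set.mem_preimage, Set.mem_Ioi] at this
        simp [h, this]
      · simp only [hS, h, if_false, Set.mem_preimage, Set.mem_Iic] at this
        simp [h, not_lt.mpr this]
    · rw [Set.indicator_of_notMem hmem]
      simp only [Set.mem_iInter] at hmem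
      push_neg at hmem
      obtain ⟨i, _, hi⟩ := hmem
      refine Finset.prod_eq_zero (Finset.mem_univ i) ?_
      by_cases h : i ∈ T
      · simp only [hS, h, if_true, Set.mem_preimage, Set.mem_Ioi] at hi
        simp [h, hi]
      · simp only [hS, h, if_false, Set.mem_preimage, Set.mem_Iic] at hi
        simp [h, lt_of_not_ge hi]
  have hInter_meas : ∀ T : Finset (Fin n),
      MeasurableSet (⋂ i ∈ (univ : Finset (Fin n)), X i ⁻¹' (S T i)) :=
    fun T => Finset.measurableSet_biInter _ (fun i _ => (hmeas i) (hSmeas T i))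
  have hint : ∀ T : Finset (Fin n), Integrable (fun ω =>
      ν T * ∏ i : Fin n, (if i ∈ T then (if t < X i ω then (1:ℝ) else 0)
        else (if t < X i ω then 0 else 1))) P := by
    intro T
    refine Integrable.const_mul ?_ _
    have : (fun ω => ∏ i : Fin n, (if i ∈ T then (if t < X i ω then (1:ℝ) else 0)
        else (if t < X i ω then 0 else 1)))
        = Set.indicator (⋂ i ∈ (univ : Finset (Fin n)), X i ⁻¹' (S T i)) (fun _ => (1:ℝ)) :=
      funext (hprod_ind T)
    rw [this]
    exact (integrable_const 1).indicator (hInter_meas T)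
  rw [integral_finset_sum _ (fun T _ => hint T)]
  refine Finset.sum_congr rfl (fun T _ => ?_)
  rw [integral_const_mul]
  congr 1
  have : (fun ω => ∏ i : Fin n, (if i ∈ T then (if t < X i ω then (1:ℝ) else 0)
      else (if t < X i ω then 0 else 1)))
      = Set.indicator (⋂ i ∈ (univ : Finset (Fin n)), X i ⁻¹' (S T i)) (fun _ => (1:ℝ)) :=
    funext (hprod_ind T)
  rw [this, show ((⋂ i ∈ (univ : Finset (Fin n)), X i ⁻¹' (S T i)).indicator (fun _ => (1:ℝ)))
    = ((⋂ i ∈ (univ : Finset (Fin n)), X i ⁻¹' (S T i)).indicator (1 : Ω → ℝ)) from rfl,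
    integral_indicator_one (hInter_meas T)]
  rw [measureReal_def, hindep.measure_inter_preimage_eq_mul univ (fun i _ => hSmeas T i)]
  have hμ : ∀ i, P (X i ⁻¹' S T i) =
      (if i ∈ T then ENNReal.ofReal (1 - t) else ENNReal.ofReal t) := by
    intro i
    rw [← Measure.map_apply (hmeas i) (hSmeas T i), hdist i,
      Measure.restrict_apply (hSmeas T i)]
    by_cases h : i ∈ T
    · have : S T i ∩ Set.Icc 0 1 = Set.Ioc t 1 := by
        simp only [hS, h, if_true]
        ext u
        simp only [Set.mem_inter_iff, Set.mem_Ioi, Set.mem_Icc, Set.mem_Ioc]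
        constructor
        · rintro ⟨h1, h2, h3⟩; exact ⟨h1, h3⟩
        · rintro ⟨h1, h2⟩; exact ⟨h1, le_trans ht.1 h1.le, h2⟩
      rw [this, Real.volume_Ioc]
      simp [h]
    · have : S T i ∩ Set.Icc 0 1 = Set.Icc 0 t := by
        simp only [hS, h, if_false]
        ext u
        simp only [Set.mem_inter_iff, Set.mem_Iic, Set.mem_Icc]
        constructor
        · rintro ⟨h1, h2, h3⟩; exact ⟨h2, h1⟩
        · rintro ⟨h1, h2⟩; exact ⟨h2, h1, le_trans h2 ht.2⟩
      rw [this, Real.volume_Icc]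
      simp [h]
  rw [Finset.prod_congr rfl (fun i _ => hμ i)]
  rw [Finset.prod_ite, Finset.prod_const, Finset.prod_const]
  have hT1 : (univ.filter (fun i : Fin n => i ∈ T)) = T := by
    ext i; simp
  have hT2 : ((univ).filter (fun i : Fin n => i ∉ T)).card = n - T.card := by
    have : (univ.filter (fun i : Fin n => i ∉ T)) = Tᶜ := by ext i; simp
    rw [this, Finset.card_compl, Fintype.card_fin]
  rw [hT1, hT2]
  rw [ENNReal.toReal_mul, ENNReal.toReal_pow, ENNReal.toReal_pow,
    ENNReal.toReal_ofReal (by linarith [ht.2]), ENNReal.toReal_ofReal ht.1]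


/-- in the standard uniform case, `E[Y_ν] = (1/(n+1)) Σ_{T ⊆ N} ν(T)/C(n,|T|)`. -/
theorem statement8 {Ω : Type*} [MeasurableSpace Ω] {n : ℕ} (hn : 0 < n)
    (P : Measure Ω) [IsProbabilityMeasure P]
    (ν : Finset (Fin n) → ℝ) (hν0 : ν ∅ = 0) (hν01 : ∀ T, ν T ∈ Set.Icc (0:ℝ) 1)
    (X : Fin n → Ω → ℝ) (hmeas : ∀ i, Measurable (X i))
    (hindep : iIndepFun X P)
    (hdist : ∀ i, Measure.map (X i) P = volume.restrict (Set.Icc (0:ℝ) 1)) :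
    ∫ ω, choquet ν (fun i => X i ω) ∂P
      = (1 / ((n : ℝ) + 1)) * ∑ T : Finset (Fin n), ν T / (Nat.choose n T.card : ℝ) := by
  set μ : Measure ℝ := volume.restrict (Set.Icc (0:ℝ) 1) with hμdef
  haveI hμprob : IsProbabilityMeasure μ := by
    constructor
    rw [hμdef, Measure.restrict_apply_univ, Real.volume_Icc]
    norm_num
  set g : Ω → ℝ → ℝ := fun ω t => ν (univ.filter fun i => t < X i ω) with hg
  -- Step 1: reduce to the double integral
  have step1 : ∫ ω, choquet ν (fun i => X i ω) ∂P = ∫ ω, (∫ t, g ω t ∂μ) ∂P := by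
    refine integral_congr_ae ?_
    filter_upwards [aux_ae_inj P X hmeas hindep hdist, aux_ae_mem_Icc P X hmeas hdist]
      with ω hinj hmem
    exact aux_choquet_eq_integral ν hν0 _ hinj hmem
  -- measurability of the uncurried function
  have hGmeas : Measurable (Function.uncurry g) := by
    have hGeq : Function.uncurry g = fun p : Ω × ℝ =>
        ∑ T : Finset (Fin n), ν T *
          ∏ i : Fin n, (if i ∈ T then (if p.2 < X i p.1 then (1:ℝ) else 0)
            else (if p.2 < X i p.1 then 0 else 1)) :=
      funext fun p => aux_decomp ν (fun i => X i p.1) p.2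
    rw [hGeq]
    refine Finset.measurable_sum _ (fun T _ => Measurable.const_mul ?_ _)
    refine Finset.measurable_prod _ (fun i _ => ?_)
    have hset : MeasurableSet {p : Ω × ℝ | p.2 < X i p.1} :=
      measurableSet_lt measurable_snd ((hmeas i).comp measurable_fst)
    by_cases h : i ∈ T
    · simp only [h, if_true]
      exact Measurable.ite hset measurable_const measurable_const
    · simp only [h, if_false]
      exact Measurable.ite hset measurable_const measurable_const
  -- integrability
  have hGint : Integrable (Function.uncurry g) (P.prod μ) := by
    refine ⟨hGmeas.aestronglyMeasurable, HasFiniteIntegral.of_bounded (C := 1) ?_⟩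
    refine Filter.Eventually.of_forall (fun p => ?_)
    rcases hν01 (univ.filter fun i => p.2 < X i p.1) with ⟨h0, h1⟩
    have habs : |ν (univ.filter fun i => p.2 < X i p.1)| ≤ 1 := abs_le.mpr ⟨by linarith, h1⟩
    simpa [Function.uncurry, hg, Real.norm_eq_abs] using habs
  -- Step 2: Fubini
  have step2 : ∫ ω, (∫ t, g ω t ∂μ) ∂P = ∫ t, (∫ ω, g ω t ∂P) ∂μ :=
    integral_integral_swap hGint
  -- Step 3: inner expectation
  have step3 : ∫ t, (∫ ω, g ω t ∂P) ∂μ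
      = ∫ t, (∑ T : Finset (Fin n), ν T * ((1 - t) ^ T.card * t ^ (n - T.card))) ∂μ := by
    refine integral_congr_ae ?_
    filter_upwards [ae_restrict_mem measurableSet_Icc] with t ht
    exact aux_exp_t P ν X hmeas hindep hdist ht
  -- Step 4: compute the resulting integral
  have step4 : ∫ t, (∑ T : Finset (Fin n), ν T * ((1 - t) ^ T.card * t ^ (n - T.card))) ∂μ
      = ∑ T : Finset (Fin n), ν T *
          (((n - T.card).factorial * T.card.factorial : ℝ) / ((n + 1).factorial : ℝ)) := by
    rw [integral_finset_sum]
    · refine Finset.sum_congr rfl (fun T _ => ?_)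
      rw [integral_const_mul]
      congr 1
      have hcomm : ∀ t : ℝ, (1 - t) ^ T.card * t ^ (n - T.card)
          = t ^ (n - T.card) * (1 - t) ^ T.card := fun t => mul_comm _ _
      rw [integral_congr_ae (Filter.Eventually.of_forall hcomm), hμdef,
        aux_beta_nat_Icc (n - T.card) T.card]
      have hk : T.card ≤ n := by
        have := Finset.card_le_univ T
        simpa using this
      have : n - T.card + T.card + 1 = n + 1 := by omega
      rw [this]
    · intro T _
      have hcont : Continuous (fun t : ℝ => ν T * ((1 - t) ^ T.card * t ^ (n - T.card))) := by
        fun_prop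
      rw [hμdef]
      exact hcont.integrableOn_Icc
  -- Step 5: final algebra
  have step5 : ∑ T : Finset (Fin n), ν T *
      (((n - T.card).factorial * T.card.factorial : ℝ) / ((n + 1).factorial : ℝ))
      = (1 / ((n : ℝ) + 1)) * ∑ T : Finset (Fin n), ν T / (Nat.choose n T.card : ℝ) := by
    rw [Finset.mul_sum]
    refine Finset.sum_congr rfl (fun T _ => ?_)
    have hk : T.card ≤ n := by
      have := Finset.card_le_univ T
      simpa using this
    have hfact : ((n.choose T.card : ℝ)) * (T.card.factorial : ℝ) * ((n - T.card).factorial : ℝ)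
        = (n.factorial : ℝ) := by
      exact_mod_cast Nat.choose_mul_factorial_mul_factorial hk
    have h1 : (((n + 1).factorial : ℕ) : ℝ) = ((n : ℝ) + 1) * (n.factorial : ℝ) := by
      rw [Nat.factorial_succ]
      push_cast
      ring
    have hCpos : (0 : ℝ) < (n.choose T.card : ℝ) := by
      exact_mod_cast Nat.choose_pos hk
    have hnfpos : (0 : ℝ) < (n.factorial : ℝ) := by exact_mod_cast n.factorial_pos
    have hn1pos : (0 : ℝ) < (n : ℝ) + 1 := by positivity
    have hbeta : (((n - T.card).factorial * T.card.factorial : ℝ) / ((n + 1).factorial : ℝ))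
        = (1 / ((n : ℝ) + 1)) * (1 / (n.choose T.card : ℝ)) := by
      rw [h1, one_div_mul_one_div, div_eq_div_iff (by positivity) (by positivity)]
      linear_combination ((n : ℝ) + 1) * hfact
    rw [hbeta]
    field_simp
  rw [step1, step2, step3, step4, step5]

end ChoquetPaper
end
end

section
/- Let a_0, a_1, …, a_n be pairwise distinct real numbers and let g : ℝ → ℝ be n times continuously differentiable. Then ∫_{{x ∈ [0,1]^n : x_1 ≥ x_2 ≥ ⋯ ≥ x_n}} g^{(n)}( a_0 + Σ_{i=1}^n (a_i − a_{i−1}) x_i ) dx = Σ_{i=0}^n g(a_i) / Π_{j ≠ i} (a_i − a_j). -/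
open MeasureTheory ProbabilityTheory Finset

noncomputable section

namespace ChoquetPaper

variable {n : ℕ} {Ω : Type*}

section HGAux

open MeasureTheory Finset

/-- reindexing a divided-difference sum along an injection -/
lemma sum_reindex {N : ℕ} (e : Fin (N+1) → Fin (N+2)) (he : Function.Injective e)
    (g : ℝ → ℝ) (a : Fin (N+2) → ℝ) :
    ∑ i ∈ Finset.univ.image e, g (a i) / ∏ j ∈ (Finset.univ.image e).erase i, (a i - a j)
      = ∑ i : Fin (N+1), g (a (e i)) / ∏ j ∈ Finset.univ.erase i, (a (e i) - a (e j)) := by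
  rw [Finset.sum_image (fun x _ y _ h => he h)]
  refine Finset.sum_congr rfl fun i _ => ?_
  congr 1
  have : (Finset.univ.image e).erase (e i) = (Finset.univ.erase i).image e := by
    ext k
    constructor
    · intro hk
      rcases Finset.mem_erase.mp hk with ⟨hk1, hk2⟩
      rcases Finset.mem_image.mp hk2 with ⟨j, _, rfl⟩
      exact Finset.mem_image.mpr ⟨j, Finset.mem_erase.mpr
        ⟨fun h => hk1 (by rw [h]), Finset.mem_univ _⟩, rfl⟩
    · intro hk
      rcases Finset.mem_image.mp hk with ⟨j, hj, rfl⟩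
      exact Finset.mem_erase.mpr ⟨fun h => (Finset.mem_erase.mp hj).1 (he h),
        Finset.mem_image.mpr ⟨j, Finset.mem_univ _, rfl⟩⟩
  rw [this, Finset.prod_image (fun x _ y _ h => he h)]

lemma image_succ_univ (N : ℕ) :
    (Finset.univ : Finset (Fin (N+1))).image Fin.succ
      = (Finset.univ : Finset (Fin (N+2))).erase 0 := by
  ext j
  simp only [Finset.mem_image, Finset.mem_univ, true_and, Finset.mem_erase, and_true]
  constructor
  · rintro ⟨i, rfl⟩; exact Fin.succ_ne_zero i
  · intro hj; exact ⟨j.pred hj, Fin.succ_pred j hj⟩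

/-- the injection `Fin (N+1) → Fin (N+2)` skipping `1` -/
def em (N : ℕ) : Fin (N+1) → Fin (N+2) := Fin.cons 0 (fun j => j.succ.succ)

@[simp] lemma em_zero (N : ℕ) : em N 0 = 0 := rfl
@[simp] lemma em_succ (N : ℕ) (j : Fin N) : em N j.succ = j.succ.succ := by
  simp [em]

lemma em_injective (N : ℕ) : Function.Injective (em N) := by
  intro i j h
  induction i using Fin.cases with
  | zero =>
    induction j using Fin.cases with
    | zero => rfl
    | succ j => rw [em_zero, em_succ] at h; exact absurd h.symm (Fin.succ_ne_zero _)
  | succ i =>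
    induction j using Fin.cases with
    | zero => rw [em_zero, em_succ] at h; exact absurd h (Fin.succ_ne_zero _)
    | succ j =>
      rw [em_succ, em_succ] at h
      rw [Fin.succ_inj.mp (Fin.succ_inj.mp h)]

lemma image_em_univ (N : ℕ) :
    (Finset.univ : Finset (Fin (N+1))).image (em N)
      = (Finset.univ : Finset (Fin (N+2))).erase 1 := by
  ext j
  simp only [Finset.mem_image, Finset.mem_univ, true_and, Finset.mem_erase, and_true]
  constructor
  · rintro ⟨i, rfl⟩
    induction i using Fin.cases with
    | zero => rw [em_zero]; simp [Fin.ext_iff]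
    | succ i => rw [em_succ]; simp [Fin.ext_iff]
  · intro hj
    induction j using Fin.cases with
    | zero => exact ⟨0, rfl⟩
    | succ j =>
      induction j using Fin.cases with
      | zero => exact absurd rfl hj
      | succ j => exact ⟨j.succ, by rw [em_succ]⟩

/-- recurrence for divided differences, removing points `0` and `1` -/
lemma ddiff_step {N : ℕ} (g : ℝ → ℝ) (a : Fin (N+2) → ℝ) (ha : Function.Injective a) :
    ∑ i : Fin (N+2), g (a i) / ∏ j ∈ Finset.univ.erase i, (a i - a j)
      = ((∑ i ∈ Finset.univ.erase (0 : Fin (N+2)),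
            g (a i) / ∏ j ∈ (Finset.univ.erase (0 : Fin (N+2))).erase i, (a i - a j))
        - ∑ i ∈ Finset.univ.erase (1 : Fin (N+2)),
            g (a i) / ∏ j ∈ (Finset.univ.erase (1 : Fin (N+2))).erase i, (a i - a j))
        / (a 1 - a 0) := by
  have h10 : (1 : Fin (N+2)) ≠ 0 := by simp [Fin.ext_iff]
  have hne : ∀ i j : Fin (N+2), i ≠ j → a i - a j ≠ 0 := fun i j h => sub_ne_zero.mpr (ha.ne h)
  have hd : a 1 - a 0 ≠ 0 := hne 1 0 h10
  set s2 : Finset (Fin (N+2)) := (Finset.univ.erase (0 : Fin (N+2))).erase 1 with hs2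
  have h1mem : (1 : Fin (N+2)) ∈ Finset.univ.erase 0 := Finset.mem_erase.mpr ⟨h10, Finset.mem_univ _⟩
  have h0mem : (0 : Fin (N+2)) ∈ Finset.univ.erase 1 :=
    Finset.mem_erase.mpr ⟨Ne.symm h10, Finset.mem_univ _⟩
  have hswap : (Finset.univ.erase (1 : Fin (N+2))).erase 0 = s2 := Finset.erase_right_comm
  rw [eq_div_iff hd]
  -- split sums
  rw [← Finset.add_sum_erase _ _ (Finset.mem_univ (0 : Fin (N+2))),
      ← Finset.add_sum_erase _ (fun i => g (a i) / ∏ j ∈ Finset.univ.erase i, (a i - a j)) h1mem,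
      ← Finset.add_sum_erase _ _ h1mem,
      ← Finset.add_sum_erase _ _ h0mem, hswap]
  -- boundary products
  have P0 : ∏ j ∈ Finset.univ.erase (0 : Fin (N+2)), (a 0 - a j)
      = (a 0 - a 1) * ∏ j ∈ s2, (a 0 - a j) := by
    rw [← Finset.mul_prod_erase _ _ h1mem, hs2]
  have P1 : ∏ j ∈ Finset.univ.erase (1 : Fin (N+2)), (a 1 - a j)
      = (a 1 - a 0) * ∏ j ∈ s2, (a 1 - a j) := by
    rw [← Finset.mul_prod_erase _ _ h0mem, hswap]
  have hP0 : ∏ j ∈ s2, ((a 0) - a j) ≠ 0 :=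
    Finset.prod_ne_zero_iff.mpr fun j hj => hne 0 j
      (fun h => (by simp [hs2] at hj; exact hj.2 h.symm))
  have hP1 : ∏ j ∈ s2, ((a 1) - a j) ≠ 0 :=
    Finset.prod_ne_zero_iff.mpr fun j hj => hne 1 j
      (fun h => (by simp [hs2] at hj; exact hj.1 h.symm))
  have hb01 : (Finset.univ.erase (0 : Fin (N+2))).erase 1 = s2 := rfl
  -- the erased-both-boundary product in rhs2 first term:
  rw [P0, P1]
  -- pointwise sum identity over s2
  have key : ∑ i ∈ s2, (g (a i) / ∏ j ∈ Finset.univ.erase i, (a i - a j)) * (a 1 - a 0)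
      = ∑ i ∈ s2, (g (a i) / ∏ j ∈ (Finset.univ.erase (0 : Fin (N+2))).erase i, (a i - a j)
          - g (a i) / ∏ j ∈ (Finset.univ.erase (1 : Fin (N+2))).erase i, (a i - a j)) := by
    refine Finset.sum_congr rfl fun i hi => ?_
    have hi1 : i ≠ 1 := (Finset.mem_erase.mp hi).1
    have hi0 : i ≠ 0 := (Finset.mem_erase.mp (Finset.mem_erase.mp hi).2).1
    have h0i : (0 : Fin (N+2)) ∈ Finset.univ.erase i :=
      Finset.mem_erase.mpr ⟨(Ne.symm hi0), Finset.mem_univ _⟩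
    have h1i : (1 : Fin (N+2)) ∈ (Finset.univ.erase i).erase 0 :=
      Finset.mem_erase.mpr ⟨h10, Finset.mem_erase.mpr ⟨Ne.symm hi1, Finset.mem_univ _⟩⟩
    have e0 : ∏ j ∈ Finset.univ.erase i, (a i - a j)
        = (a i - a 0) * ((a i - a 1) * ∏ j ∈ s2.erase i, (a i - a j)) := by
      rw [← Finset.mul_prod_erase _ _ h0i, ← Finset.mul_prod_erase _ _ h1i]
      congr 2
      rw [Finset.erase_right_comm (a:=i) (b:=0), Finset.erase_right_comm (a:=i) (b:=1)]
    have h1i' : (1 : Fin (N+2)) ∈ (Finset.univ.erase (0 : Fin (N+2))).erase i :=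
      Finset.mem_erase.mpr ⟨Ne.symm hi1, h1mem⟩
    have e1 : ∏ j ∈ (Finset.univ.erase (0 : Fin (N+2))).erase i, (a i - a j)
        = (a i - a 1) * ∏ j ∈ s2.erase i, (a i - a j) := by
      rw [← Finset.mul_prod_erase _ _ h1i']
      congr 1
      rw [Finset.erase_right_comm (a:=i) (b:=1)]
    have h0i' : (0 : Fin (N+2)) ∈ (Finset.univ.erase (1 : Fin (N+2))).erase i :=
      Finset.mem_erase.mpr ⟨Ne.symm hi0, h0mem⟩
    have e2 : ∏ j ∈ (Finset.univ.erase (1 : Fin (N+2))).erase i, (a i - a j)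
        = (a i - a 0) * ∏ j ∈ s2.erase i, (a i - a j) := by
      rw [← Finset.mul_prod_erase _ _ h0i']
      congr 1
      rw [Finset.erase_right_comm (a:=i) (b:=0), hswap]
    have hR : ∏ j ∈ s2.erase i, (a i - a j) ≠ 0 :=
      Finset.prod_ne_zero_iff.mpr fun j hj => hne i j (Ne.symm (Finset.mem_erase.mp hj).1)
    have hi0' : a i - a 0 ≠ 0 := hne i 0 hi0
    have hi1' : a i - a 1 ≠ 0 := hne i 1 hi1
    rw [e0, e1, e2]
    field_simp
    ring
  rw [add_mul, add_mul, Finset.sum_mul, key, Finset.sum_sub_distrib]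
  have h01' : a 0 - a 1 ≠ 0 := hne 0 1 (Ne.symm h10)
  have t1 : g (a 0) / ((a 0 - a 1) * ∏ j ∈ s2, (a 0 - a j)) * (a 1 - a 0)
      = -(g (a 0) / ∏ j ∈ s2, (a 0 - a j)) := by
    field_simp
    ring
  have t2 : g (a 1) / ((a 1 - a 0) * ∏ j ∈ s2, (a 1 - a j)) * (a 1 - a 0)
      = g (a 1) / ∏ j ∈ s2, (a 1 - a j) := by
    field_simp
  rw [t1, t2]
  ring


section Aux

lemma isClosed_simp (n : ℕ) :
    IsClosed {x : Fin n → ℝ | (∀ i, x i ∈ Set.Icc (0:ℝ) 1) ∧ ∀ i j : Fin n, i ≤ j → x j ≤ x i} := by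
  have h1 : IsClosed {x : Fin n → ℝ | ∀ i, x i ∈ Set.Icc (0:ℝ) 1} := by
    have : {x : Fin n → ℝ | ∀ i, x i ∈ Set.Icc (0:ℝ) 1}
        = ⋂ i, (fun x : Fin n → ℝ => x i) ⁻¹' Set.Icc (0:ℝ) 1 := by
      ext x; simp
    rw [this]
    exact isClosed_iInter fun i => isClosed_Icc.preimage (continuous_apply i)
  have h2 : IsClosed {x : Fin n → ℝ | ∀ i j : Fin n, i ≤ j → x j ≤ x i} := by
    have : {x : Fin n → ℝ | ∀ i j : Fin n, i ≤ j → x j ≤ x i}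
        = ⋂ i, ⋂ j, ⋂ (_ : i ≤ j), {x : Fin n → ℝ | x j ≤ x i} := by
      ext x; simp
    rw [this]
    exact isClosed_iInter fun i => isClosed_iInter fun j => isClosed_iInter fun _ =>
      isClosed_le (continuous_apply j) (continuous_apply i)
  exact h1.inter h2

lemma isCompact_simp (n : ℕ) :
    IsCompact {x : Fin n → ℝ | (∀ i, x i ∈ Set.Icc (0:ℝ) 1) ∧ ∀ i j : Fin n, i ≤ j → x j ≤ x i} := by
  refine IsCompact.of_isClosed_subset
    (isCompact_univ_pi fun _ : Fin n => (isCompact_Icc : IsCompact (Set.Icc (0:ℝ) 1)))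
    (isClosed_simp n) ?_
  intro x hx
  rw [Set.mem_univ_pi]
  exact fun i => hx.1 i

end Aux

lemma HG : ∀ (n : ℕ) (a : Fin (n + 1) → ℝ), Function.Injective a →
    ∀ g : ℝ → ℝ, ContDiff ℝ n g →
    (∫ x in {x : Fin n → ℝ | (∀ i, x i ∈ Set.Icc (0:ℝ) 1) ∧ ∀ i j : Fin n, i ≤ j → x j ≤ x i},
        iteratedDeriv n g (a 0 + ∑ i : Fin n, (a i.succ - a i.castSucc) * x i))
      = ∑ i : Fin (n + 1), g (a i) / ∏ j ∈ Finset.univ.erase i, (a i - a j) := by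
  intro n
  induction n with
  | zero =>
    intro a _ g _
    have hset : {x : Fin 0 → ℝ | (∀ i, x i ∈ Set.Icc (0:ℝ) 1) ∧ ∀ i j : Fin 0, i ≤ j → x j ≤ x i}
        = Set.univ := by
      ext x; simp
    rw [hset, Measure.restrict_univ]
    simp [iteratedDeriv_zero, volume_pi, integral_const, Measure.pi_univ, measureReal_def]
  | succ N IH =>
    intro a ha g hg
    -- notation
    set S : Set (Fin (N+1) → ℝ) :=
      {x : Fin (N+1) → ℝ | (∀ i, x i ∈ Set.Icc (0:ℝ) 1) ∧ ∀ i j : Fin (N+1), i ≤ j → x j ≤ x i}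
      with hSdef
    set F : (Fin (N+1) → ℝ) → ℝ := fun x =>
      iteratedDeriv (N+1) g (a 0 + ∑ i : Fin (N+1), (a i.succ - a i.castSucc) * x i) with hFdef
    set d : ℝ := a 1 - a 0 with hddef
    have hd : d ≠ 0 := sub_ne_zero.mpr (ha.ne (by simp [Fin.ext_iff]))
    set b : Fin (N+1) → ℝ := fun i => a i.succ with hbdef
    set c : Fin (N+1) → ℝ := fun i => a (em N i) with hcdef
    set G : ℝ → ℝ := iteratedDeriv N g with hGdef
    set G' : ℝ → ℝ := iteratedDeriv (N+1) g with hG'def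
    set cnst : (Fin N → ℝ) → ℝ := fun y =>
      a 0 + ∑ i : Fin N, (a i.succ.succ - a i.succ.castSucc) * y i with hcnstdef
    set Bv : (Fin N → ℝ) → ℝ := fun y =>
      b 0 + ∑ i : Fin N, (b i.succ - b i.castSucc) * y i with hBvdef
    set Cv : (Fin N → ℝ) → ℝ := fun y =>
      c 0 + ∑ i : Fin N, (c i.succ - c i.castSucc) * y i with hCvdef
    set L : (Fin N → ℝ) → ℝ := fun y => if h : 0 < N then y ⟨0, h⟩ else 0 with hLdef
    set S' : Set (Fin N → ℝ) :=
      {y : Fin N → ℝ | (∀ i, y i ∈ Set.Icc (0:ℝ) 1) ∧ ∀ i j : Fin N, i ≤ j → y j ≤ y i}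
      with hS'def
    have hLpos : ∀ (h : 0 < N) (y : Fin N → ℝ), L y = y ⟨0, h⟩ := fun h y => dif_pos h
    have hLzero : N = 0 → ∀ y : Fin N → ℝ, L y = 0 := fun h y => dif_neg (by omega)
    -- algebraic identities
    have F1 : ∀ (t : ℝ) (y : Fin N → ℝ),
        a 0 + ∑ i : Fin (N+1), (a i.succ - a i.castSucc) * (Fin.cons t y : Fin (N+1) → ℝ) i = cnst y + d * t := by
      intro t y
      rw [Fin.sum_univ_succ]
      simp only [Fin.cons_zero, Fin.cons_succ, hcnstdef, hddef]
      have : (0 : Fin (N+1)).succ = 1 := rfl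
      rw [this, Fin.castSucc_zero]
      ring
    have F2 : ∀ y : Fin N → ℝ, cnst y + d * 1 = Bv y := by
      intro y
      simp only [hcnstdef, hBvdef, hddef, hbdef]
      have : ∀ i : Fin N, a i.succ.castSucc = a i.castSucc.succ := by
        intro i; rw [Fin.succ_castSucc]
      simp_rw [this]
      have h0 : (Fin.succ (0 : Fin (N+1))) = 1 := rfl
      rw [h0]
      ring
    have F3 : ∀ y : Fin N → ℝ, cnst y + d * L y = Cv y := by
      intro y
      simp only [hcnstdef, hCvdef, hddef, hLdef, hcdef]
      have hcsucc : ∀ i : Fin N, a (em N i.succ) = a i.succ.succ := by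
        intro i; rw [em_succ]
      simp_rw [hcsucc, em_zero]
      rcases Nat.eq_zero_or_pos N with hN | hN
      · subst hN
        simp
      · rw [dif_pos hN]
        obtain ⟨M, rfl⟩ : ∃ M, N = M + 1 := ⟨N - 1, by omega⟩
        rw [Fin.sum_univ_succ, Fin.sum_univ_succ (f := fun i : Fin (M+1) =>
          (a i.succ.succ - a (em (M+1) i.castSucc)) * y i)]
        have e1 : (em (M+1)) ((0 : Fin (M+1)).castSucc) = 0 := by
          rw [Fin.castSucc_zero, em_zero]
        have e2 : ∀ j : Fin M, (em (M+1)) (j.succ.castSucc) = j.succ.castSucc.succ := by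
          intro j
          rw [← Fin.succ_castSucc, em_succ, Fin.succ_castSucc]
        have e3 : ∀ j : Fin M, a (j.succ.succ.castSucc) = a (j.succ.castSucc.succ) := by
          intro j; rw [Fin.succ_castSucc]
        simp_rw [e1, e2, e3]
        have hz : (⟨0, hN⟩ : Fin (M+1)) = 0 := rfl
        rw [hz]
        have hone : ((0 : Fin (M+1)).succ.castSucc) = (1 : Fin (M+1+1+1)) := by
          simp [Fin.ext_iff]
        rw [hone]
        ring
    -- membership characterisation
    have F4 : ∀ (t : ℝ) (y : Fin N → ℝ),
        Fin.cons t y ∈ S ↔ (y ∈ S' ∧ t ∈ Set.Icc (L y) 1) := by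
      intro t y
      constructor
      · rintro ⟨hIcc, hmono⟩
        have hy1 : ∀ i, y i ∈ Set.Icc (0:ℝ) 1 := by
          intro i
          have := hIcc i.succ
          rwa [Fin.cons_succ] at this
        have hy2 : ∀ i j : Fin N, i ≤ j → y j ≤ y i := by
          intro i j hij
          have := hmono i.succ j.succ (Fin.succ_le_succ_iff.mpr hij)
          rwa [Fin.cons_succ, Fin.cons_succ] at this
        refine ⟨⟨hy1, hy2⟩, ?_, ?_⟩
        · show L y ≤ t
          rcases Nat.eq_zero_or_pos N with hN | hN
          · rw [hLzero hN y]
            exact (hIcc 0).1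
          · rw [hLpos hN y]
            have := hmono 0 (Fin.succ ⟨0, hN⟩) (Fin.zero_le _)
            rwa [Fin.cons_succ, Fin.cons_zero] at this
        · exact (hIcc 0).2
      · rintro ⟨⟨hy1, hy2⟩, htL, ht1⟩
        have h0L : 0 ≤ L y := by
          rcases Nat.eq_zero_or_pos N with hN | hN
          · rw [hLzero hN y]
          · rw [hLpos hN y]; exact (hy1 _).1
        constructor
        · intro i
          induction i using Fin.cases with
          | zero => rw [Fin.cons_zero]; exact ⟨le_trans h0L htL, ht1⟩
          | succ i => rw [Fin.cons_succ]; exact hy1 i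
        · intro i j hij
          induction i using Fin.cases with
          | zero =>
            induction j using Fin.cases with
            | zero => exact le_refl _
            | succ j =>
              rw [Fin.cons_succ, Fin.cons_zero]
              have hN : 0 < N := j.pos
              calc y j ≤ y ⟨0, hN⟩ := hy2 _ _ (by simp [Fin.le_def])
                _ = L y := (hLpos hN y).symm
                _ ≤ t := htL
          | succ i =>
            induction j using Fin.cases with
            | zero =>
              exact absurd hij (by simp [Fin.le_def])
            | succ j =>
              rw [Fin.cons_succ, Fin.cons_succ]
              exact hy2 i j (Fin.succ_le_succ_iff.mp hij)
    -- continuity and integrability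
    have hA : Continuous fun x : Fin (N+1) → ℝ =>
        a 0 + ∑ i : Fin (N+1), (a i.succ - a i.castSucc) * x i :=
      continuous_const.add (continuous_finset_sum _ fun i _ =>
        continuous_const.mul (continuous_apply i))
    have hGcont : Continuous G := by
      rw [hGdef]
      exact hg.continuous_iteratedDeriv N (by exact_mod_cast Nat.le_succ N)
    have hG'cont : Continuous G' := by
      rw [hG'def]
      exact hg.continuous_iteratedDeriv (N+1) (by exact_mod_cast le_refl (N+1))
    have hFcont : Continuous F := by rw [hFdef]; exact hG'cont.comp hA
    have hSmeas : MeasurableSet S := (isClosed_simp (N+1)).measurableSet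
    have hScomp : IsCompact S := isCompact_simp (N+1)
    have hS'meas : MeasurableSet S' := (isClosed_simp N).measurableSet
    have hS'comp : IsCompact S' := isCompact_simp N
    have hInt : Integrable (S.indicator F) volume :=
      (integrable_indicator_iff hSmeas).mpr (hFcont.continuousOn.integrableOn_compact hScomp)
    -- split off the first coordinate
    have mp := (measurePreserving_piFinSuccAbove (fun _ : Fin (N+1) => (volume : Measure ℝ)) 0).symm
    have key0 : ∀ p : ℝ × (Fin N → ℝ),
        (MeasurableEquiv.piFinSuccAbove (fun _ : Fin (N+1) => ℝ) 0).symm p = Fin.cons p.1 p.2 := by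
      intro p
      simp [MeasurableEquiv.piFinSuccAbove_symm_apply, Fin.insertNthEquiv, Fin.insertNth_zero]
    have hIntProd : Integrable (fun p : ℝ × (Fin N → ℝ) => S.indicator F (Fin.cons p.1 p.2))
        ((volume : Measure ℝ).prod (Measure.pi fun _ : Fin N => (volume : Measure ℝ))) := by
      have h1 := (mp.integrable_comp_emb
        (MeasurableEquiv.measurableEmbedding
          ((MeasurableEquiv.piFinSuccAbove (fun _ : Fin (N+1) => ℝ) 0).symm))).mpr
        (by rw [← volume_pi]; exact hInt)
      have : (S.indicator F ∘ (MeasurableEquiv.piFinSuccAbove (fun _ : Fin (N+1) => ℝ) 0).symm)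
          = fun p : ℝ × (Fin N → ℝ) => S.indicator F (Fin.cons p.1 p.2) := by
        funext p
        rw [Function.comp_apply, key0]
      rwa [this] at h1
    have step1 : (∫ x in S, F x)
        = ∫ y : Fin N → ℝ, ∫ t : ℝ, S.indicator F (Fin.cons t y) ∂(volume : Measure ℝ)
            ∂(Measure.pi fun _ : Fin N => (volume : Measure ℝ)) := by
      rw [← integral_indicator hSmeas]
      have e1 : (∫ x, S.indicator F x)
          = ∫ p : ℝ × (Fin N → ℝ), S.indicator F (Fin.cons p.1 p.2)
              ∂((volume : Measure ℝ).prod (Measure.pi fun _ : Fin N => (volume : Measure ℝ))) := by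
        rw [show (volume : Measure (Fin (N+1) → ℝ)) = Measure.pi fun _ => volume from volume_pi]
        rw [← mp.integral_comp' (S.indicator F)]
        congr 1
        funext p
        rw [key0]
      rw [e1, MeasureTheory.integral_prod_symm _ hIntProd]
    -- inner integral
    have inner : ∀ y : Fin N → ℝ,
        (∫ t : ℝ, S.indicator F (Fin.cons t y) ∂(volume : Measure ℝ))
          = S'.indicator (fun y => (G (Bv y) - G (Cv y)) / d) y := by
      intro y
      by_cases hy : y ∈ S'
      · have hind : ∀ t : ℝ, S.indicator F (Fin.cons t y)
            = (Set.Icc (L y) 1).indicator (fun t => G' (cnst y + d * t)) t := by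
          intro t
          by_cases ht : t ∈ Set.Icc (L y) 1
          · rw [Set.indicator_of_mem ((F4 t y).mpr ⟨hy, ht⟩), Set.indicator_of_mem ht, hFdef]
            simp only [hG'def]
            rw [F1 t y]
          · rw [Set.indicator_of_notMem (fun hmem => ht ((F4 t y).mp hmem).2),
              Set.indicator_of_notMem ht]
        rw [Set.indicator_of_mem hy]
        simp_rw [hind]
        rw [MeasureTheory.integral_indicator measurableSet_Icc]
        have h0L : 0 ≤ L y := by
          rcases Nat.eq_zero_or_pos N with hN | hN
          · rw [hLzero hN y]
          · rw [hLpos hN y]; exact (hy.1 _).1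
        have hL1 : L y ≤ 1 := by
          rcases Nat.eq_zero_or_pos N with hN | hN
          · rw [hLzero hN y]; norm_num
          · rw [hLpos hN y]; exact (hy.1 _).2
        rw [MeasureTheory.integral_Icc_eq_integral_Ioc,
          ← intervalIntegral.integral_of_le hL1]
        have hdiffG : Differentiable ℝ G := by
          rw [hGdef]
          exact hg.differentiable_iteratedDeriv N (by exact_mod_cast Nat.lt_succ_self N)
        have hderiv : ∀ t ∈ Set.uIcc (L y) 1,
            HasDerivAt (fun t => G (cnst y + d * t) / d) (G' (cnst y + d * t)) t := by
          intro t _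
          have h1 : HasDerivAt (fun t : ℝ => cnst y + d * t) d t := by
            simpa using ((hasDerivAt_id t).const_mul d).const_add (cnst y)
          have h2 : HasDerivAt G (G' (cnst y + d * t)) (cnst y + d * t) := by
            have h3 := (hdiffG (cnst y + d * t)).hasDerivAt
            rwa [show deriv G = G' by rw [hGdef, hG'def, iteratedDeriv_succ]] at h3
          have h3 := (h2.comp t h1).div_const d
          simpa [Function.comp_def, mul_div_assoc, mul_div_cancel_right₀ _ hd] using h3
        have hcontI : Continuous fun t : ℝ => G' (cnst y + d * t) :=
          hG'cont.comp (continuous_const.add (continuous_const.mul continuous_id))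
        rw [intervalIntegral.integral_eq_sub_of_hasDerivAt hderiv
          (hcontI.intervalIntegrable _ _)]
        rw [F2 y, F3 y]
        ring
      · rw [Set.indicator_of_notMem hy]
        have hz : ∀ t : ℝ, S.indicator F (Fin.cons t y) = 0 := fun t =>
          Set.indicator_of_notMem (fun hmem => hy ((F4 t y).mp hmem).1) _
        simp_rw [hz, integral_zero]
    -- outer integral
    have hBvcont : Continuous Bv := by
      rw [hBvdef]
      exact continuous_const.add (continuous_finset_sum _ fun i _ =>
        continuous_const.mul (continuous_apply i))
    have hCvcont : Continuous Cv := by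
      rw [hCvdef]
      exact continuous_const.add (continuous_finset_sum _ fun i _ =>
        continuous_const.mul (continuous_apply i))
    have hIB : IntegrableOn (fun y => G (Bv y)) S' volume :=
      ((hGcont.comp hBvcont).continuousOn).integrableOn_compact hS'comp
    have hIC : IntegrableOn (fun y => G (Cv y)) S' volume :=
      ((hGcont.comp hCvcont).continuousOn).integrableOn_compact hS'comp
    have hb : Function.Injective b := by
      rw [hbdef]; exact fun i j h => Fin.succ_injective _ (ha h)
    have hc : Function.Injective c := by
      rw [hcdef]; exact fun i j h => em_injective N (ha h)
    have hgN : ContDiff ℝ N g := hg.of_le (by exact_mod_cast Nat.le_succ N)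
    have IB := IH b hb g hgN
    have IC := IH c hc g hgN
    have step2 : (∫ x in S, F x)
        = ((∫ y in S', G (Bv y)) - ∫ y in S', G (Cv y)) / d := by
      rw [step1]
      have : (fun y : Fin N → ℝ => ∫ t : ℝ, S.indicator F (Fin.cons t y) ∂(volume : Measure ℝ))
          = S'.indicator (fun y => (G (Bv y) - G (Cv y)) / d) := by
        funext y; exact inner y
      rw [this, ← volume_pi, MeasureTheory.integral_indicator hS'meas]
      rw [MeasureTheory.integral_div, MeasureTheory.integral_sub hIB hIC]
    rw [step2]
    have eqB : (∫ y in S', G (Bv y))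
        = ∑ i : Fin (N+1), g (b i) / ∏ j ∈ Finset.univ.erase i, (b i - b j) := by
      rw [← IB]
    have eqC : (∫ y in S', G (Cv y))
        = ∑ i : Fin (N+1), g (c i) / ∏ j ∈ Finset.univ.erase i, (c i - c j) := by
      rw [← IC]
    rw [eqB, eqC, ddiff_step g a ha]
    rw [← image_succ_univ N, ← image_em_univ N,
      sum_reindex Fin.succ (Fin.succ_injective (N+1)) g a,
      sum_reindex (em N) (em_injective N) g a]

end HGAux

/-- the Hermite–Genocchi formula combined with the explicit expression of divided
differences at pairwise distinct arguments. -/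
theorem statement13 {n : ℕ} (hn : 0 < n)
    (a : Fin (n + 1) → ℝ) (ha : Function.Injective a)
    (g : ℝ → ℝ) (hg : ContDiff ℝ n g) :
    ∫ x in {x : Fin n → ℝ | (∀ i, x i ∈ Set.Icc (0:ℝ) 1) ∧ ∀ i j : Fin n, i ≤ j → x j ≤ x i},
        iteratedDeriv n g (a 0 + ∑ i : Fin n, (a i.succ - a i.castSucc) * x i)
      = ∑ i : Fin (n + 1), g (a i) / ∏ j ∈ Finset.univ.erase i, (a i - a j) :=
  HG n a ha g hg

end ChoquetPaper
end
end

section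
/- Let y ∈ ℝ, let b_1,…,b_r be pairwise distinct reals with b_k < y for all k, and let c_1,…,c_s be pairwise distinct reals with c_l > y for all l (so all r+s numbers are pairwise distinct). For integers k, l with 1 ≤ k ≤ r and 1 ≤ l ≤ s define α_{k,l} := Δ[(·−y)_+^{k+l−2} : b_1,…,b_k,c_1,…,c_l], and set α_{0,l} := 0 and α_{k,0} := 0 for all k, l. Then α_{1,1} = 1/(c_1 − b_1), and for all (k,l) with 1 ≤ k ≤ r, 1 ≤ l ≤ s and (k,l) ≠ (1,1), α_{k,l} = ( (c_l − y)·α_{k−1,l} + (y − b_k)·α_{k,l−1} ) / (c_l − b_k). -/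
open MeasureTheory ProbabilityTheory Finset

noncomputable section

namespace ChoquetPaper

variable {n : ℕ} {Ω : Type*}

lemma ddiff_congr {ι : Type*} [DecidableEq ι] {g g' : ℝ → ℝ} {s : Finset ι} {a : ι → ℝ}
    (h : ∀ i ∈ s, g (a i) = g' (a i)) : ddiff g s a = ddiff g' s a :=
  Finset.sum_congr rfl fun i hi => by rw [h i hi]

/-- Key algebraic lemma: dividing out a linear factor from a divided difference. -/
lemma ddiff_mul_sub {ι : Type*} [DecidableEq ι] (g : ℝ → ℝ) (y : ℝ) {s : Finset ι} {a : ι → ℝ}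
    (ha : Set.InjOn a s) {i0 : ι} (h0 : i0 ∈ s) :
    ddiff (fun t => (t - y) * g t) s a
      = (a i0 - y) * ddiff g s a + ddiff g (s.erase i0) a := by
  unfold ddiff
  have step : ∀ i ∈ s, ((a i - y) * g (a i)) / (∏ j ∈ s.erase i, (a i - a j))
      = (a i0 - y) * (g (a i) / ∏ j ∈ s.erase i, (a i - a j))
        + ((a i - a i0) * g (a i)) / (∏ j ∈ s.erase i, (a i - a j)) := by
    intro i _
    rw [mul_div_assoc', ← add_div]
    congr 1
    ring
  rw [Finset.sum_congr rfl step, Finset.sum_add_distrib, ← Finset.mul_sum]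
  congr 1
  have h00 : ((a i0 - a i0) * g (a i0)) / (∏ j ∈ s.erase i0, (a i0 - a j)) = 0 := by
    simp
  rw [← Finset.sum_erase s h00]
  refine Finset.sum_congr rfl ?_
  intro i hi
  obtain ⟨hne, his⟩ := Finset.mem_erase.mp hi
  have h0i : i0 ∈ s.erase i := Finset.mem_erase.mpr ⟨Ne.symm hne, h0⟩
  have hprod : ∏ j ∈ s.erase i, (a i - a j)
      = (a i - a i0) * ∏ j ∈ (s.erase i).erase i0, (a i - a j) :=
    (Finset.mul_prod_erase _ _ h0i).symm
  have hne' : a i - a i0 ≠ 0 :=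
    sub_ne_zero_of_ne (fun h => hne (ha his h0 h))
  rw [hprod, mul_div_mul_left _ _ hne', Finset.erase_right_comm]

/-- The divided difference of the constant 1 over at least two points vanishes. -/
lemma ddiff_one_eq_zero {ι : Type*} [DecidableEq ι] {s : Finset ι} {a : ι → ℝ}
    (ha : Set.InjOn a s) (hs : 2 ≤ s.card) :
    ddiff (fun _ => (1 : ℝ)) s a = 0 := by
  have hne : s.Nonempty := Finset.card_pos.mp (by omega)
  have hsum := Lagrange.sum_basis ha hne
  have hc : ∑ i ∈ s, (Lagrange.basis s a i).coeff (s.card - 1) = 0 := by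
    rw [← Polynomial.finset_sum_coeff, hsum, Polynomial.coeff_one, if_neg (by omega)]
  unfold ddiff
  rw [← hc]
  refine Finset.sum_congr rfl fun i hi => ?_
  have h1 : (Lagrange.basis s a i).coeff (s.card - 1)
      = (Lagrange.basis s a i).leadingCoeff := by
    rw [Polynomial.leadingCoeff, Lagrange.natDegree_basis ha hi]
  rw [h1, Lagrange.basis, Polynomial.leadingCoeff_prod, one_div, ← Finset.prod_inv_distrib]
  refine Finset.prod_congr rfl fun j _ => ?_
  rw [Lagrange.basisDivisor, Polynomial.leadingCoeff_mul, Polynomial.leadingCoeff_C,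
    (Polynomial.monic_X_sub_C (a j)).leadingCoeff, mul_one]

/-- Divided differences annihilate polynomials of too-small degree. -/
lemma ddiff_pow_eq_zero {ι : Type*} [DecidableEq ι] (y : ℝ) :
    ∀ (d : ℕ) (s : Finset ι) (a : ι → ℝ), Set.InjOn a s → d + 2 ≤ s.card →
      ddiff (fun t => (t - y) ^ d) s a = 0 := by
  intro d
  induction d with
  | zero =>
    intro s a ha hs
    rw [ddiff_congr (g' := fun _ => (1 : ℝ)) (fun i _ => by simp)]
    exact ddiff_one_eq_zero ha hs
  | succ d ih =>
    intro s a ha hs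
    obtain ⟨i0, h0⟩ : s.Nonempty := Finset.card_pos.mp (by omega)
    have h1 : ddiff (fun t => (t - y) ^ (d + 1)) s a
        = ddiff (fun t => (t - y) * (t - y) ^ d) s a :=
      ddiff_congr (fun i _ => by rw [pow_succ, mul_comm])
    rw [h1, ddiff_mul_sub _ y ha h0, ih s a ha (by omega),
      ih (s.erase i0) a (ha.mono (Finset.coe_subset.mpr (Finset.erase_subset _ _)))
        (by rw [Finset.card_erase_of_mem h0]; omega)]
    ring

lemma card_filter_val_lt {n m : ℕ} (h : m ≤ n) :
    ((Finset.univ.filter (fun j : Fin n => (j : ℕ) < m))).card = m := by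
  have : (Finset.univ.filter (fun j : Fin n => (j : ℕ) < m))
      = Finset.map (Fin.castLEEmb h) Finset.univ := by
    ext j
    simp only [Finset.mem_filter, Finset.mem_univ, true_and, Finset.mem_map,
      Fin.castLEEmb, Function.Embedding.coeFn_mk]
    constructor
    · intro hj
      exact ⟨⟨(j : ℕ), hj⟩, by simp [Fin.castLE, Fin.ext_iff]⟩
    · rintro ⟨i, rfl⟩; exact i.isLt
  rw [this, Finset.card_map, Finset.card_univ, Fintype.card_fin]

/-- the de Boor–Varsi recurrence for divided differences of plus truncated power
functions. -/
theorem statement18 (r s : ℕ) (hr : 1 ≤ r) (hs : 1 ≤ s) (y : ℝ)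
    (b : Fin r → ℝ) (c : Fin s → ℝ)
    (hb : Function.Injective b) (hc : Function.Injective c)
    (hby : ∀ k, b k < y) (hcy : ∀ l, y < c l)
    (α : ℕ → ℕ → ℝ)
    (hα1 : ∀ l, α 0 l = 0) (hα2 : ∀ k, α k 0 = 0)
    (hα : ∀ k l : ℕ, 1 ≤ k → k ≤ r → 1 ≤ l → l ≤ s →
      α k l = ddiff (fun t => tpowPos (t - y) (k + l - 2))
        ((Finset.univ.filter (fun i : Fin r => (i : ℕ) < k)).disjSum
          (Finset.univ.filter (fun j : Fin s => (j : ℕ) < l)))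
        (Sum.elim b c)) :
    α 1 1 = 1 / (c ⟨0, hs⟩ - b ⟨0, hr⟩) ∧
      ∀ (k l : ℕ) (hk1 : 1 ≤ k) (hk2 : k ≤ r) (hl1 : 1 ≤ l) (hl2 : l ≤ s), ¬(k = 1 ∧ l = 1) →
        α k l = ((c ⟨l - 1, by omega⟩ - y) * α (k - 1) l +
            (y - b ⟨k - 1, by omega⟩) * α k (l - 1)) /
          (c ⟨l - 1, by omega⟩ - b ⟨k - 1, by omega⟩) := by
  have hainj : Function.Injective (Sum.elim b c) := by
    intro x z h
    rcases x with i | i <;> rcases z with j | j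
    · simp only [Sum.elim_inl] at h; exact congrArg Sum.inl (hb h)
    · exfalso
      simp only [Sum.elim_inl, Sum.elim_inr] at h
      have h1 := hby i; have h2 := hcy j; linarith
    · exfalso
      simp only [Sum.elim_inl, Sum.elim_inr] at h
      have h1 := hby j; have h2 := hcy i; linarith
    · simp only [Sum.elim_inr] at h; exact congrArg Sum.inr (hc h)
  have key : ∀ (d : ℕ) (t : ℝ),
      tpowPos (t - y) (d + 1) = (t - y) * tpowPos (t - y) d := by
    intro d t
    by_cases h : 0 < t - y <;> simp [tpowPos, h, pow_succ, mul_comm]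
  constructor
  · -- the case α 1 1
    have h0r : (Finset.univ.filter (fun i : Fin r => (i : ℕ) < 1))
        = {(⟨0, hr⟩ : Fin r)} := by
      ext i
      simp only [Finset.mem_filter, Finset.mem_univ, true_and, Finset.mem_singleton, Fin.ext_iff]
      omega
    have h0s : (Finset.univ.filter (fun j : Fin s => (j : ℕ) < 1))
        = {(⟨0, hs⟩ : Fin s)} := by
      ext j
      simp only [Finset.mem_filter, Finset.mem_univ, true_and, Finset.mem_singleton, Fin.ext_iff]
      omega
    have hpair : ({(⟨0, hr⟩ : Fin r)} : Finset (Fin r)).disjSum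
        ({(⟨0, hs⟩ : Fin s)} : Finset (Fin s))
        = {Sum.inl ⟨0, hr⟩, Sum.inr ⟨0, hs⟩} := by
      ext x; rcases x with i | j <;> simp
    rw [hα 1 1 le_rfl hr le_rfl hs, h0r, h0s, hpair]
    unfold ddiff
    rw [Finset.sum_pair (by simp)]
    have e1 : ({Sum.inl ⟨0, hr⟩, Sum.inr ⟨0, hs⟩} :
        Finset (Fin r ⊕ Fin s)).erase (Sum.inl ⟨0, hr⟩) = {Sum.inr ⟨0, hs⟩} := by
      rw [Finset.erase_insert (by simp)]
    have e2 : ({Sum.inl ⟨0, hr⟩, Sum.inr ⟨0, hs⟩} :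
        Finset (Fin r ⊕ Fin s)).erase (Sum.inr ⟨0, hs⟩) = {Sum.inl ⟨0, hr⟩} := by
      rw [Finset.pair_comm, Finset.erase_insert (by simp)]
    rw [e1, e2]
    have hb0 := hby ⟨0, hr⟩
    have hc0 := hcy ⟨0, hs⟩
    simp only [Sum.elim_inl, Sum.elim_inr, Finset.prod_singleton, tpowPos]
    simp only [show ¬ (0 < b ⟨0, hr⟩ - y) by linarith, show 0 < c ⟨0, hs⟩ - y by linarith, ↓reduceIte]
    simp
  · -- the recurrence
    intro k l hk1 hk2 hl1 hl2 hkl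
    have hK : k - 1 < r := by omega
    have hL : l - 1 < s := by omega
    have hm : 3 ≤ k + l := by omega
    set a : Fin r ⊕ Fin s → ℝ := Sum.elim b c with ha_def
    set S : Finset (Fin r ⊕ Fin s) :=
      ((Finset.univ.filter (fun i : Fin r => (i : ℕ) < k)).disjSum
        (Finset.univ.filter (fun j : Fin s => (j : ℕ) < l))) with hS_def
    set g' : ℝ → ℝ := fun t => tpowPos (t - y) (k + l - 3) with hg'_def
    have hiK : Sum.inl (⟨k - 1, hK⟩ : Fin r) ∈ S := by
      simp only [hS_def, Finset.inl_mem_disjSum, Finset.mem_filter, Finset.mem_univ, true_and]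
      omega
    have hiL : Sum.inr (⟨l - 1, hL⟩ : Fin s) ∈ S := by
      simp only [hS_def, Finset.inr_mem_disjSum, Finset.mem_filter, Finset.mem_univ, true_and]
      omega
    have hsplit : ddiff (fun t => tpowPos (t - y) (k + l - 2)) S a
        = ddiff (fun t => (t - y) * g' t) S a := by
      apply ddiff_congr
      intro i _
      rw [show k + l - 2 = (k + l - 3) + 1 by omega, key]
    have hE1 : α k l = (b ⟨k - 1, hK⟩ - y) * ddiff g' S a
        + ddiff g' (S.erase (Sum.inl ⟨k - 1, hK⟩)) a := by
      rw [hα k l hk1 hk2 hl1 hl2, hsplit, ddiff_mul_sub _ y hainj.injOn hiK]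
      rfl
    have hE2 : α k l = (c ⟨l - 1, hL⟩ - y) * ddiff g' S a
        + ddiff g' (S.erase (Sum.inr ⟨l - 1, hL⟩)) a := by
      rw [hα k l hk1 hk2 hl1 hl2, hsplit, ddiff_mul_sub _ y hainj.injOn hiL]
      rfl
    have hSK : S.erase (Sum.inl ⟨k - 1, hK⟩)
        = (Finset.univ.filter (fun i : Fin r => (i : ℕ) < k - 1)).disjSum
          (Finset.univ.filter (fun j : Fin s => (j : ℕ) < l)) := by
      ext x
      rcases x with i | j <;>
        simp only [hS_def, Finset.mem_erase, Finset.inl_mem_disjSum, Finset.inr_mem_disjSum,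
          Finset.mem_filter, Finset.mem_univ, true_and, ne_eq, Sum.inl.injEq, Fin.ext_iff,
          reduceCtorEq, not_false_iff] <;> omega
    have hSL : S.erase (Sum.inr ⟨l - 1, hL⟩)
        = (Finset.univ.filter (fun i : Fin r => (i : ℕ) < k)).disjSum
          (Finset.univ.filter (fun j : Fin s => (j : ℕ) < l - 1)) := by
      ext x
      rcases x with i | j <;>
        simp only [hS_def, Finset.mem_erase, Finset.inl_mem_disjSum, Finset.inr_mem_disjSum,
          Finset.mem_filter, Finset.mem_univ, true_and, ne_eq, Sum.inr.injEq, Fin.ext_iff,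
          reduceCtorEq, not_false_iff] <;> omega
    have hD1 : ddiff g' (S.erase (Sum.inl ⟨k - 1, hK⟩)) a = α (k - 1) l := by
      rw [hSK]
      rcases Nat.lt_or_ge 1 k with hk2' | hk1'
      · rw [hα (k - 1) l (by omega) (by omega) hl1 hl2,
          show (k - 1) + l - 2 = k + l - 3 by omega]
      · have hk : k = 1 := by omega
        have hl2' : 2 ≤ l := by omega
        have h0 : (Finset.univ.filter (fun i : Fin r => (i : ℕ) < k - 1))
            = (∅ : Finset (Fin r)) := by
          ext i; simp; omega
        rw [h0, show k - 1 = 0 from by omega, hα1 l]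
        set T := ((∅ : Finset (Fin r)).disjSum
          (Finset.univ.filter (fun j : Fin s => (j : ℕ) < l))) with hT_def
        have hcongr : ddiff g' T a = ddiff (fun t => (t - y) ^ (k + l - 3)) T a := by
          apply ddiff_congr
          intro x hx
          rcases x with i | j
          · exfalso; simp [hT_def] at hx
          · have hcj := hcy j
            simp [hg'_def, ha_def, tpowPos, sub_pos, hcj]
        have hcard : T.card = l := by
          rw [hT_def, Finset.card_disjSum, Finset.card_empty, zero_add,
            card_filter_val_lt hl2]
        rw [hcongr]
        exact ddiff_pow_eq_zero y (k + l - 3) T a hainj.injOn (by omega)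
    have hD2 : ddiff g' (S.erase (Sum.inr ⟨l - 1, hL⟩)) a = α k (l - 1) := by
      rw [hSL]
      rcases Nat.lt_or_ge 1 l with hl2' | hl1'
      · rw [hα k (l - 1) hk1 hk2 (by omega) (by omega),
          show k + (l - 1) - 2 = k + l - 3 by omega]
      · have hl : l = 1 := by omega
        have h0 : (Finset.univ.filter (fun j : Fin s => (j : ℕ) < l - 1))
            = (∅ : Finset (Fin s)) := by
          ext j; simp; omega
        rw [h0, show l - 1 = 0 from by omega, hα2 k]
        unfold ddiff
        apply Finset.sum_eq_zero
        intro x hx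
        rcases x with i | j
        · have hbi := hby i
          have hz : g' (a (Sum.inl i)) = 0 := by
            simp [hg'_def, ha_def, tpowPos, sub_pos, hbi.not_gt]
          rw [hz, zero_div]
        · exfalso; simp at hx
    rw [hD1] at hE1
    rw [hD2] at hE2
    have hb1 := hby ⟨k - 1, hK⟩
    have hc1 := hcy ⟨l - 1, hL⟩
    rw [eq_div_iff (by intro h; simp only [sub_eq_zero] at h; linarith)]
    linear_combination (c ⟨l - 1, hL⟩ - y) * hE1 + (y - b ⟨k - 1, hK⟩) * hE2

end ChoquetPaper
end
end
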